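/- arXiv:2001.10640 — 2 statements merged into one kernel-verified Lean document; each statement's English description precedes it below -/
import Mathlib

section
/- Let n = m be even with n ≥ 8, and consider the Probabilistic Serial mechanism where agents 1 and 2 report o_1 ≻ o_2 ≻ ⋯ ≻ o_n and each agent i ∈ {3,…,n} reports o_2 ≻ o_3 ≻ ⋯ ≻ o_n ≻ o_1. Then in the resulting eating process, agent 1 receives exactly 1/2 of item o_1 and receives 0 of each of the items o_2, o_3, …, o_{n/2−1}. In particular, if agent 1's utilities are dichotomous with interest set O̅ = {o_1,…,o_{n/2−1}} (so its report is truthful), its truthful utility is u_1 = 1/2. -/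
open MeasureTheory

/-- An execution of the Probabilistic Serial eating process with `n` agents and `m` items
(each of supply 1).  Agent `i` reports the strict preference order encoded by the injective
rank function `rk i` (`rk i j < rk i j'` means agent `i` ranks item `j` above item `j'`).
`active i t` tells whether agent `i` participates (eats at rate 1) at time `t`; the normal
scenario is `active = fun _ _ => True`, pausing/removing agents is modelled by making them
inactive.  `eats i t = some j` means agent `i` is eating item `j` at time `t`, and `rem j t`
is the remaining supply of item `j` at time `t`: it equals `1` minus the total time agents
have spent eating `j` during `(0, t]`.  An active agent always eats its most preferred item
among those with positive remaining supply. -/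
structure PSExec (n m : ℕ) (rk : Fin n → Fin m → ℕ) (active : Fin n → ℝ → Prop) where
  eats : Fin n → ℝ → Option (Fin m)
  rem : Fin m → ℝ → ℝ
  meas : ∀ i j, MeasurableSet {t : ℝ | eats i t = some j}
  rem_def : ∀ j, ∀ t : ℝ, 0 ≤ t →
    rem j t = 1 - ∑ i : Fin n,
      (volume {s : ℝ | 0 < s ∧ s ≤ t ∧ eats i s = some j}).toReal
  eats_iff : ∀ i, ∀ t : ℝ, 0 ≤ t → active i t → ∀ j,
    (eats i t = some j ↔ 0 < rem j t ∧ ∀ j', 0 < rem j' t → rk i j ≤ rk i j')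
  eats_none : ∀ i, ∀ t : ℝ, ¬ active i t → eats i t = none

namespace PSExec

variable {n m : ℕ} {rk : Fin n → Fin m → ℕ} {active : Fin n → ℝ → Prop}

/-- The total amount of item `j` eaten by agent `i` (the allocation `x i j`). -/
noncomputable def alloc (E : PSExec n m rk active) (i : Fin n) (j : Fin m) : ℝ :=
  (volume {s : ℝ | 0 < s ∧ E.eats i s = some j}).toReal

/-- The expected utility of agent `i` with cardinal utilities `a`. -/
noncomputable def utility (E : PSExec n m rk active) (a : Fin m → ℝ) (i : Fin n) : ℝ :=
  ∑ j, a j * E.alloc i j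

/-- Item `j` is exhausted exactly at time `τ`. -/
def exhaustedAt (E : PSExec n m rk active) (j : Fin m) (τ : ℝ) : Prop :=
  0 < τ ∧ E.rem j τ = 0 ∧ ∀ s : ℝ, 0 ≤ s → s < τ → 0 < E.rem j s

/-- Agent `i` is eating item `j` at the moment `τ`, in the left-limit sense (this is the
sense used for "eating an item at the moment of its exhaustion"). -/
def eatsAt (E : PSExec n m rk active) (i : Fin n) (j : Fin m) (τ : ℝ) : Prop :=
  ∃ δ > 0, ∀ s : ℝ, τ - δ < s → s < τ → E.eats i s = some j

/-- `T` is the exact moment at which the last item of `Obar` is exhausted. -/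
def exhaustTime (E : PSExec n m rk active) (Obar : Finset (Fin m)) (T : ℝ) : Prop :=
  (∀ j ∈ Obar, E.rem j T = 0) ∧ ∀ s : ℝ, 0 ≤ s → s < T → ∃ j ∈ Obar, 0 < E.rem j s

end PSExec

/-- Dichotomous cardinal utilities with interest set `Obar`. -/
def dicho {m : ℕ} (Obar : Finset (Fin m)) : Fin m → ℝ :=
  fun j => if j ∈ Obar then 1 else 0


section Helpers

open Set

namespace PSExec

variable {n : ℕ} {rk : Fin n → Fin n → ℕ} (E : PSExec n n rk (fun _ _ => True))

lemma seteq (i j : Fin n) (t : ℝ) :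
    {s : ℝ | 0 < s ∧ s ≤ t ∧ E.eats i s = some j}
      = Set.Ioc (0:ℝ) t ∩ {s | E.eats i s = some j} := by
  ext s; simp only [Set.mem_setOf_eq, Set.mem_inter_iff, Set.mem_Ioc]; tauto

lemma vol_ne_top (i j : Fin n) {a b : ℝ} :
    volume (Set.Ioc a b ∩ {s | E.eats i s = some j}) ≠ ⊤ :=
  ((measure_mono Set.inter_subset_left).trans_lt measure_Ioc_lt_top).ne

lemma measA (i j : Fin n) (a b : ℝ) :
    MeasurableSet (Set.Ioc a b ∩ {s | E.eats i s = some j}) :=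
  measurableSet_Ioc.inter (E.meas i j)

lemma rem_eq (j : Fin n) {t : ℝ} (ht : 0 ≤ t) :
    E.rem j t = 1 - ∑ i, (volume (Set.Ioc (0:ℝ) t ∩ {s | E.eats i s = some j})).toReal := by
  rw [E.rem_def j t ht]
  congr 1
  exact Finset.sum_congr rfl fun i _ => by rw [E.seteq]

lemma rem_zero (j : Fin n) : E.rem j 0 = 1 := by
  rw [E.rem_eq j le_rfl]
  simp

lemma rem_diff (j : Fin n) {t1 t2 : ℝ} (h0 : 0 ≤ t1) (h12 : t1 ≤ t2) :
    E.rem j t1 - E.rem j t2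
      = ∑ i, (volume (Set.Ioc t1 t2 ∩ {s | E.eats i s = some j})).toReal := by
  rw [E.rem_eq j h0, E.rem_eq j (h0.trans h12)]
  have : ∀ i : Fin n,
      (volume (Set.Ioc (0:ℝ) t2 ∩ {s | E.eats i s = some j})).toReal
        = (volume (Set.Ioc (0:ℝ) t1 ∩ {s | E.eats i s = some j})).toReal
          + (volume (Set.Ioc t1 t2 ∩ {s | E.eats i s = some j})).toReal := by
    intro i
    have hset : Set.Ioc (0:ℝ) t2 ∩ {s | E.eats i s = some j}
        = (Set.Ioc (0:ℝ) t1 ∩ {s | E.eats i s = some j})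
          ∪ (Set.Ioc t1 t2 ∩ {s | E.eats i s = some j}) := by
      rw [← Set.union_inter_distrib_right, Set.Ioc_union_Ioc_eq_Ioc h0 h12]
    have hdisj : Disjoint (Set.Ioc (0:ℝ) t1) (Set.Ioc t1 t2) := by
      rw [Set.disjoint_left]; rintro x ⟨_, hx2⟩ ⟨hx3, _⟩; linarith
    rw [hset, measure_union (hdisj.mono Set.inter_subset_left Set.inter_subset_left)
        (E.measA i j t1 t2),
      ENNReal.toReal_add (E.vol_ne_top i j) (E.vol_ne_top i j)]
  simp only [this]
  rw [Finset.sum_add_distrib]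
  ring

lemma rem_mono (j : Fin n) {t1 t2 : ℝ} (h0 : 0 ≤ t1) (h12 : t1 ≤ t2) :
    E.rem j t2 ≤ E.rem j t1 := by
  have h := E.rem_diff j h0 h12
  have : 0 ≤ E.rem j t1 - E.rem j t2 := by
    rw [h]
    exact Finset.sum_nonneg fun i _ => ENNReal.toReal_nonneg
  linarith

lemma rem_lip (j : Fin n) {t1 t2 : ℝ} (h0 : 0 ≤ t1) (h12 : t1 ≤ t2) :
    E.rem j t1 - E.rem j t2 ≤ n * (t2 - t1) := by
  rw [E.rem_diff j h0 h12]
  calc ∑ i : Fin n, (volume (Set.Ioc t1 t2 ∩ {s | E.eats i s = some j})).toReal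
      ≤ ∑ _i : Fin n, (t2 - t1) := by
        refine Finset.sum_le_sum fun i _ => ?_
        have h1 : volume (Set.Ioc t1 t2 ∩ {s | E.eats i s = some j})
            ≤ volume (Set.Ioc t1 t2) := measure_mono Set.inter_subset_left
        have h2 := ENNReal.toReal_mono measure_Ioc_lt_top.ne h1
        rwa [Real.volume_Ioc, ENNReal.toReal_ofReal (by linarith)] at h2
    _ = n * (t2 - t1) := by simp [mul_comm]; ring

lemma eats_pos {i j : Fin n} {t : ℝ} (ht : 0 ≤ t) (h : E.eats i t = some j) :
    0 < E.rem j t :=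
  ((E.eats_iff i t ht trivial j).1 h).1

/-- the infimum packaging -/
lemma inf_zero (j : Fin n) {t0 : ℝ} (ht0 : 0 ≤ t0) (h : E.rem j t0 ≤ 0) :
    ∃ τ, 0 ≤ τ ∧ τ ≤ t0 ∧ E.rem j τ ≤ 0 ∧ (∀ s, 0 ≤ s → s < τ → 0 < E.rem j s)
      ∧ (∀ s, τ < s → s ≤ t0 → E.rem j s ≤ 0) := by
  set S : Set ℝ := {s | s ∈ Set.Icc 0 t0 ∧ E.rem j s ≤ 0} with hS
  have hne : t0 ∈ S := ⟨⟨ht0, le_rfl⟩, h⟩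
  have hbdd : BddBelow S := ⟨0, fun s hs => hs.1.1⟩
  set τ := sInf S with hτ
  have hτ0 : 0 ≤ τ := le_csInf ⟨t0, hne⟩ fun s hs => hs.1.1
  have hτt0 : τ ≤ t0 := csInf_le hbdd hne
  have hbelow : ∀ s, 0 ≤ s → s < τ → 0 < E.rem j s := by
    intro s hs hsτ
    by_contra hcon
    push_neg at hcon
    exact absurd (csInf_le hbdd ⟨⟨hs, le_trans hsτ.le hτt0⟩, hcon⟩) (not_le.mpr hsτ)
  have habove : ∀ s, τ < s → s ≤ t0 → E.rem j s ≤ 0 := by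
    intro s hτs hst0
    obtain ⟨s', hs'S, hs's⟩ := exists_lt_of_csInf_lt ⟨t0, hne⟩ hτs
    exact le_trans (E.rem_mono j hs'S.1.1 hs's.le) hs'S.2
  refine ⟨τ, hτ0, hτt0, ?_, hbelow, habove⟩
  -- rem j τ ≤ 0 by approaching from the right
  by_contra hpos
  push_neg at hpos
  obtain ⟨s', hs'S, hs'lt⟩ := exists_lt_of_csInf_lt ⟨t0, hne⟩
    (show τ < τ + E.rem j τ / (n + 1) by
      have : (0:ℝ) < (n:ℝ) + 1 := by positivity
      have := div_pos hpos this
      linarith)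
  have hτs' : τ ≤ s' := csInf_le hbdd hs'S
  have hlip := E.rem_lip j hτ0 hτs'
  have hn1 : (0:ℝ) < (n:ℝ) + 1 := by positivity
  have hfrac : (n:ℝ) * (E.rem j τ / (n+1)) < E.rem j τ := by
    rw [mul_div_assoc'] at *
    rw [div_lt_iff₀ hn1]
    nlinarith
  nlinarith [hs'S.2, hlip, hs'lt]

lemma rem_nonneg (j : Fin n) {t : ℝ} (ht : 0 ≤ t) : 0 ≤ E.rem j t := by
  by_contra hneg
  push_neg at hneg
  obtain ⟨τ, hτ0, hτt, hτle, hbelow, habove⟩ := E.inf_zero j ht hneg.le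
  -- rem j τ = 0
  have hτge : 0 ≤ E.rem j τ := by
    rcases eq_or_lt_of_le hτ0 with heq | hτpos
    · rw [← heq, E.rem_zero]; norm_num
    · by_contra hc
      push_neg at hc
      set c := -E.rem j τ with hcdef
      have hcpos : 0 < c := by simp [hcdef]; linarith
      set s := max 0 (τ - c / (n+1)) with hsdef
      have hn1 : (0:ℝ) < (n:ℝ) + 1 := by positivity
      have hs0 : 0 ≤ s := le_max_left _ _
      have hsτ : s < τ := by
        rw [hsdef, max_lt_iff]
        constructor
        · exact hτpos
        · have := div_pos hcpos hn1; linarith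
      have hgap : τ - s ≤ c / (n+1) := by
        have : τ - c/(n+1) ≤ s := le_max_right _ _
        linarith
      have hlip := E.rem_lip j hs0 hsτ.le
      have hposs := hbelow s hs0 hsτ
      have : (n:ℝ) * (τ - s) ≤ (n:ℝ) * (c/(n+1)) :=
        mul_le_mul_of_nonneg_left hgap (Nat.cast_nonneg n)
      have hfrac : (n:ℝ) * (c/(n+1)) < c := by
        rw [mul_div_assoc', div_lt_iff₀ hn1]
        nlinarith
      nlinarith
  have hτeq : E.rem j τ = 0 := le_antisymm hτle hτge
  -- rem j t = rem j τ since nobody eats j on (τ, t]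
  have hdiff := E.rem_diff j hτ0 hτt
  have hzero : ∀ i : Fin n, volume (Set.Ioc τ t ∩ {s | E.eats i s = some j}) = 0 := by
    intro i
    have hemp : Set.Ioc τ t ∩ {s | E.eats i s = some j} = ∅ := by
      ext s
      simp only [Set.mem_inter_iff, Set.mem_Ioc, Set.mem_setOf_eq, Set.mem_empty_iff_false,
        iff_false, not_and, and_imp]
      intro hτs hst heat
      have h1 := E.eats_pos (le_trans hτ0 hτs.le) heat
      have h2 := habove s hτs hst
      linarith
    rw [hemp, measure_empty]
  have hsum0 : E.rem j τ - E.rem j t = 0 := by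
    rw [hdiff]
    exact Finset.sum_eq_zero fun i _ => by rw [hzero i]; rfl
  linarith

lemma eats_exists (i : Fin n) {t : ℝ} (ht : 0 ≤ t) {j0 : Fin n} (hj0 : 0 < E.rem j0 t) :
    ∃ j, E.eats i t = some j ∧ 0 < E.rem j t ∧ rk i j ≤ rk i j0 := by
  obtain ⟨j, hjmem, hjmin⟩ := Finset.exists_min_image
    (Finset.univ.filter fun k => 0 < E.rem k t) (rk i) ⟨j0, by simp [hj0]⟩
  simp only [Finset.mem_filter, Finset.mem_univ, true_and] at hjmem hjmin
  refine ⟨j, (E.eats_iff i t ht trivial j).2 ⟨hjmem, fun j' hj' => hjmin j' (by simp [hj'])⟩,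
    hjmem, hjmin j0 (by simp [hj0])⟩

lemma vol_biUnion (i : Fin n) (K : Finset (Fin n)) (a b : ℝ) :
    volume (⋃ k ∈ K, Set.Ioc a b ∩ {s | E.eats i s = some k})
      = ∑ k ∈ K, volume (Set.Ioc a b ∩ {s | E.eats i s = some k}) := by
  refine measure_biUnion_finset ?_ fun k _ => E.measA i k a b
  intro k _ k' _ hkk'
  rw [Function.onFun, Set.disjoint_left]
  rintro s ⟨_, hs1⟩ ⟨_, hs2⟩
  simp only [Set.mem_setOf_eq] at hs1 hs2
  exact hkk' (Option.some_injective _ (hs1.symm.trans hs2))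

lemma vol_sum_le (i : Fin n) (K : Finset (Fin n)) {a b : ℝ} (hab : a ≤ b) :
    ∑ k ∈ K, (volume (Set.Ioc a b ∩ {s | E.eats i s = some k})).toReal ≤ b - a := by
  rw [← ENNReal.toReal_sum (fun k _ => E.vol_ne_top i k), ← E.vol_biUnion i K a b]
  have h1 : volume (⋃ k ∈ K, Set.Ioc a b ∩ {s | E.eats i s = some k})
      ≤ volume (Set.Ioc a b) := measure_mono (by simp [Set.iUnion_subset_iff])
  have h2 := ENNReal.toReal_mono measure_Ioc_lt_top.ne h1
  rwa [Real.volume_Ioc, ENNReal.toReal_ofReal (by linarith)] at h2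

lemma vol_sum_ge (i : Fin n) (K : Finset (Fin n)) {a b : ℝ} (hab : a ≤ b)
    (h : ∀ s, a < s → s < b → ∃ k ∈ K, E.eats i s = some k) :
    b - a ≤ ∑ k ∈ K, (volume (Set.Ioc a b ∩ {s | E.eats i s = some k})).toReal := by
  rw [← ENNReal.toReal_sum (fun k _ => E.vol_ne_top i k), ← E.vol_biUnion i K a b]
  have h1 : Set.Ioo a b ⊆ ⋃ k ∈ K, Set.Ioc a b ∩ {s | E.eats i s = some k} := by
    intro s hs
    obtain ⟨k, hk, hek⟩ := h s hs.1 hs.2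
    exact Set.mem_biUnion hk ⟨⟨hs.1, hs.2.le⟩, hek⟩
  have hfin : volume (⋃ k ∈ K, Set.Ioc a b ∩ {s | E.eats i s = some k}) ≠ ⊤ :=
    ((measure_mono (show (⋃ k ∈ K, Set.Ioc a b ∩ {s | E.eats i s = some k}) ⊆ Set.Ioc a b by
      simp [Set.iUnion_subset_iff])).trans_lt measure_Ioc_lt_top).ne
  have h2 := ENNReal.toReal_mono hfin (measure_mono h1)
  rwa [Real.volume_Ioo, ENNReal.toReal_ofReal (by linarith)] at h2

end PSExec

end Helpers

/-- tight example, truthful profile: `n = m` even, `n ≥ 8`; agents 1 and 2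
report `o₁ ≻ o₂ ≻ ⋯ ≻ oₙ` and every other agent reports `o₂ ≻ o₃ ≻ ⋯ ≻ oₙ ≻ o₁` (items are
indexed so that `o_k` is the item of index `k - 1`).  Then agent 1 receives exactly `1/2` of
`o₁` and nothing of `o₂, …, o_{n/2-1}`; with dichotomous utilities on
`O̅ = {o₁, …, o_{n/2-1}}` its truthful utility is `1/2`. -/
theorem tight_example_truthful
    (n : ℕ) (hn : 8 ≤ n) (hne : Even n)
    (rk : Fin n → Fin n → ℕ)
    (hrk12 : ∀ i : Fin n, (i : ℕ) ≤ 1 → ∀ j : Fin n, rk i j = (j : ℕ))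
    (hrkrest : ∀ i : Fin n, 2 ≤ (i : ℕ) → ∀ j : Fin n,
        rk i j = if (j : ℕ) = 0 then n else (j : ℕ))
    (E : PSExec n n rk (fun _ _ => True))
    (i1 : Fin n) (hi1 : (i1 : ℕ) = 0) :
    E.alloc i1 ⟨0, by omega⟩ = 1 / 2 ∧
    (∀ j : Fin n, 1 ≤ (j : ℕ) → (j : ℕ) ≤ n / 2 - 2 → E.alloc i1 j = 0) ∧
    E.utility (dicho (Finset.univ.filter (fun j : Fin n => (j : ℕ) ≤ n / 2 - 2))) i1
      = 1 / 2 := by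
  have hn0 : 0 < n := by omega
  set j0 : Fin n := ⟨0, by omega⟩ with hj0def
  have hj0val : (j0 : ℕ) = 0 := rfl
  -- every moment in (0, 1/2] some item other than j0 is positive
  have hex : ∀ s : ℝ, 0 < s → s ≤ 1/2 → ∃ j : Fin n, j ≠ j0 ∧ 0 < E.rem j s := by
    intro s hs0 hs12
    by_contra hcon
    push_neg at hcon
    have hzero : ∀ j : Fin n, j ≠ j0 → E.rem j s = 0 := fun j hj =>
      le_antisymm (hcon j hj) (E.rem_nonneg j hs0.le)
    have hsum : ∑ j ∈ Finset.univ.erase j0, E.rem j s = 0 :=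
      Finset.sum_eq_zero fun j hj => hzero j (Finset.ne_of_mem_erase hj)
    have hcard : (Finset.univ.erase j0).card = n - 1 := by
      rw [Finset.card_erase_of_mem (Finset.mem_univ _), Finset.card_univ, Fintype.card_fin]
    have hlb : (n:ℝ) - 1 - n * s ≤ ∑ j ∈ Finset.univ.erase j0, E.rem j s := by
      rw [Finset.sum_congr rfl (fun j _ => E.rem_eq j hs0.le), Finset.sum_sub_distrib,
        Finset.sum_const, hcard]
      have hswap : ∑ j ∈ Finset.univ.erase j0, ∑ i : Fin n,
            (volume (Set.Ioc (0:ℝ) s ∩ {u | E.eats i u = some j})).toReal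
          = ∑ i : Fin n, ∑ j ∈ Finset.univ.erase j0,
            (volume (Set.Ioc (0:ℝ) s ∩ {u | E.eats i u = some j})).toReal :=
        Finset.sum_comm
      rw [hswap]
      have hbound : ∑ i : Fin n, ∑ j ∈ Finset.univ.erase j0,
            (volume (Set.Ioc (0:ℝ) s ∩ {u | E.eats i u = some j})).toReal
          ≤ n * s := by
        calc ∑ i : Fin n, ∑ j ∈ Finset.univ.erase j0,
              (volume (Set.Ioc (0:ℝ) s ∩ {u | E.eats i u = some j})).toReal
            ≤ ∑ _i : Fin n, s := by
              refine Finset.sum_le_sum fun i _ => ?_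
              have := E.vol_sum_le i (Finset.univ.erase j0) hs0.le
              linarith
          _ = n * s := by simp [mul_comm]
      have hcast : ((n - 1 : ℕ) : ℝ) = (n:ℝ) - 1 := by
        rw [Nat.cast_sub (by omega)]; norm_num
      rw [nsmul_eq_mul, hcast]
      linarith
    rw [hsum] at hlb
    have : (n:ℝ) * s ≤ (n:ℝ) * (1/2) :=
      mul_le_mul_of_nonneg_left hs12 (Nat.cast_nonneg n)
    have hn8 : (8:ℝ) ≤ (n:ℝ) := by exact_mod_cast hn
    linarith
  -- agents of index ≥ 2 never eat item j0 on (0, 1/2]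
  have hnot0 : ∀ s : ℝ, 0 < s → s ≤ 1/2 → ∀ i : Fin n, 2 ≤ (i:ℕ) →
      E.eats i s ≠ some j0 := by
    intro s hs0 hs12 i hi heq
    obtain ⟨j, hjne, hjpos⟩ := hex s hs0 hs12
    have h := ((E.eats_iff i s hs0.le trivial j0).1 heq).2 j hjpos
    have hjv : (j:ℕ) ≠ 0 := fun h0 => hjne (Fin.ext (h0.trans hj0val.symm))
    rw [hrkrest i hi j0, hrkrest i hi j, hj0val] at h
    simp only [if_pos rfl, hjv, if_false] at h
    exact absurd h (not_le.mpr j.isLt)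
  -- agents 0 and 1 eat j0 exactly when its supply is positive
  have heat01 : ∀ i : Fin n, (i:ℕ) ≤ 1 → ∀ s : ℝ, 0 ≤ s →
      (E.eats i s = some j0 ↔ 0 < E.rem j0 s) := by
    intro i hi s hs
    rw [E.eats_iff i s hs trivial j0]
    constructor
    · exact fun h => h.1
    · intro h
      refine ⟨h, fun j' _ => ?_⟩
      rw [hrk12 i hi j0, hrk12 i hi j', hj0val]
      exact Nat.zero_le _
  -- formula for rem j0 on [0, 1/2]
  have hrem0 : ∀ t : ℝ, 0 ≤ t → t ≤ 1/2 →
      E.rem j0 t = 1 - 2 * (volume (Set.Ioc (0:ℝ) t ∩ {s | 0 < E.rem j0 s})).toReal := by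
    intro t ht0 ht12
    rw [E.rem_eq j0 ht0]
    congr 1
    have hf : ∀ i : Fin n,
        (volume (Set.Ioc (0:ℝ) t ∩ {s | E.eats i s = some j0})).toReal
          = if (i:ℕ) ≤ 1 then
              (volume (Set.Ioc (0:ℝ) t ∩ {s | 0 < E.rem j0 s})).toReal else 0 := by
      intro i
      by_cases hi : (i:ℕ) ≤ 1
      · rw [if_pos hi]
        congr 2
        ext s
        simp only [Set.mem_inter_iff, Set.mem_Ioc, Set.mem_setOf_eq, and_congr_right_iff]
        intro hs
        exact heat01 i hi s hs.1.le
      · rw [if_neg hi]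
        have hemp : Set.Ioc (0:ℝ) t ∩ {s | E.eats i s = some j0} = ∅ := by
          ext s
          simp only [Set.mem_inter_iff, Set.mem_Ioc, Set.mem_setOf_eq,
            Set.mem_empty_iff_false, iff_false, not_and]
          rintro ⟨hs0, hst⟩
          exact hnot0 s hs0 (hst.trans ht12) i (by omega)
        rw [hemp]
        simp
    rw [Finset.sum_congr rfl (fun i _ => hf i), Finset.sum_ite, Finset.sum_const,
      Finset.sum_const_zero, add_zero]
    have hcard2 : (Finset.univ.filter fun i : Fin n => (i:ℕ) ≤ 1).card = 2 := by
      have hft : (Finset.univ.filter fun i : Fin n => (i:ℕ) ≤ 1)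
          = {(⟨0, by omega⟩ : Fin n), ⟨1, by omega⟩} := by
        ext i
        simp only [Finset.mem_filter, Finset.mem_univ, true_and, Finset.mem_insert,
          Finset.mem_singleton, Fin.ext_iff]
        omega
      rw [hft, Finset.card_insert_of_notMem (by simp [Fin.ext_iff]), Finset.card_singleton]
    rw [hcard2, nsmul_eq_mul]
    norm_num
  -- rem j0 t = 1 - 2t whenever positive
  have hA : ∀ t : ℝ, 0 ≤ t → t ≤ 1/2 → 0 < E.rem j0 t → E.rem j0 t = 1 - 2 * t := by
    intro t ht0 ht12 hpos
    rw [hrem0 t ht0 ht12]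
    have hseteq : Set.Ioc (0:ℝ) t ∩ {s | 0 < E.rem j0 s} = Set.Ioc 0 t := by
      rw [Set.inter_eq_left]
      intro s hs
      exact lt_of_lt_of_le hpos (E.rem_mono j0 hs.1.le hs.2)
    rw [hseteq, Real.volume_Ioc, ENNReal.toReal_ofReal (by linarith)]
    ring
  -- rem j0 is positive on [0, 1/2)
  have hB : ∀ t : ℝ, 0 ≤ t → t < 1/2 → 0 < E.rem j0 t := by
    intro t ht0 ht12
    by_contra hc
    push_neg at hc
    obtain ⟨τ, hτ0, hτt, hτle, hbelow, _⟩ := E.inf_zero j0 ht0 hc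
    have hτeq : E.rem j0 τ = 0 := le_antisymm hτle (E.rem_nonneg j0 hτ0)
    have hτhalf : τ ≤ 1/2 := by linarith
    have hform := hrem0 τ hτ0 hτhalf
    have hvol : (volume (Set.Ioc (0:ℝ) τ ∩ {s | 0 < E.rem j0 s})).toReal ≤ τ := by
      have h1 : volume (Set.Ioc (0:ℝ) τ ∩ {s | 0 < E.rem j0 s})
          ≤ volume (Set.Ioc (0:ℝ) τ) := measure_mono Set.inter_subset_left
      have h2 := ENNReal.toReal_mono measure_Ioc_lt_top.ne h1
      rw [Real.volume_Ioc, ENNReal.toReal_ofReal (by linarith)] at h2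
      linarith
    rw [hτeq] at hform
    have : τ < 1/2 := by linarith
    linarith
  -- rem j0 (1/2) = 0
  have hC : E.rem j0 (1/2) = 0 := by
    have hform := hrem0 (1/2) (by norm_num) le_rfl
    have hvol : volume (Set.Ioc (0:ℝ) (1/2) ∩ {s | 0 < E.rem j0 s})
        = ENNReal.ofReal (1/2) := by
      apply le_antisymm
      · calc volume (Set.Ioc (0:ℝ) (1/2) ∩ {s | 0 < E.rem j0 s})
            ≤ volume (Set.Ioc (0:ℝ) (1/2)) := measure_mono Set.inter_subset_left
          _ = ENNReal.ofReal (1/2) := by rw [Real.volume_Ioc]; norm_num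
      · calc ENNReal.ofReal (1/2) = volume (Set.Ioo (0:ℝ) (1/2)) := by
              rw [Real.volume_Ioo]; norm_num
          _ ≤ volume (Set.Ioc (0:ℝ) (1/2) ∩ {s | 0 < E.rem j0 s}) := by
              refine measure_mono fun s hs => ⟨⟨hs.1, hs.2.le⟩, hB s hs.1.le hs.2⟩
    rw [hvol, ENNReal.toReal_ofReal (by norm_num)] at hform
    rw [hform]
    norm_num
  have hi1le : (i1:ℕ) ≤ 1 := by omega
  -- PART 1
  have part1 : E.alloc i1 j0 = 1/2 := by
    have hset : {s : ℝ | 0 < s ∧ E.eats i1 s = some j0} = Set.Ioo 0 (1/2) := by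
      ext s
      simp only [Set.mem_setOf_eq, Set.mem_Ioo]
      constructor
      · rintro ⟨hs0, heq⟩
        refine ⟨hs0, ?_⟩
        have hpos := (heat01 i1 hi1le s hs0.le).1 heq
        by_contra hge
        push_neg at hge
        have hmono := E.rem_mono j0 (by norm_num : (0:ℝ) ≤ 1/2) hge
        rw [hC] at hmono
        linarith
      · rintro ⟨hs0, hs12⟩
        exact ⟨hs0, (heat01 i1 hi1le s hs0.le).2 (hB s hs0.le hs12)⟩
    rw [PSExec.alloc, hset, Real.volume_Ioo, ENNReal.toReal_ofReal (by norm_num)]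
    norm_num
  -- PART 2
  have part2 : ∀ j : Fin n, 1 ≤ (j : ℕ) → (j : ℕ) ≤ n / 2 - 2 → E.alloc i1 j = 0 := by
    intro jj hjj1 hjj2
    -- first: jj is exhausted by time 1/2
    have hrem_jj : E.rem jj (1/2) = 0 := by
      by_contra hne0
      have hpos : 0 < E.rem jj (1/2) :=
        lt_of_le_of_ne (E.rem_nonneg jj (by norm_num)) (Ne.symm hne0)
      set K : Finset (Fin n) :=
        Finset.univ.filter fun k : Fin n => 1 ≤ (k:ℕ) ∧ (k:ℕ) ≤ (jj:ℕ) with hK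
      have heatK : ∀ i : Fin n, 2 ≤ (i:ℕ) → ∀ s : ℝ, 0 < s → s < 1/2 →
          ∃ k ∈ K, E.eats i s = some k := by
        intro i hi s hs0 hs12
        have hjjpos : 0 < E.rem jj s :=
          lt_of_lt_of_le hpos (E.rem_mono jj hs0.le hs12.le)
        obtain ⟨k, hek, hkpos, hkle⟩ := E.eats_exists i hs0.le hjjpos
        rw [hrkrest i hi k, hrkrest i hi jj] at hkle
        have hjjv : (jj:ℕ) ≠ 0 := by omega
        rw [if_neg hjjv] at hkle
        by_cases hkv : (k:ℕ) = 0
        · rw [if_pos hkv] at hkle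
          exact absurd (lt_of_le_of_lt hkle jj.isLt) (lt_irrefl n)
        · rw [if_neg hkv] at hkle
          exact ⟨k, by simp [hK, Finset.mem_filter]; omega, hek⟩
      -- lower bound on total consumption of K
      have hlow : ∀ i : Fin n, 2 ≤ (i:ℕ) →
          (1:ℝ)/2 ≤ ∑ k ∈ K, (volume (Set.Ioc (0:ℝ) (1/2)
            ∩ {s | E.eats i s = some k})).toReal := by
        intro i hi
        have := E.vol_sum_ge i K (by norm_num : (0:ℝ) ≤ 1/2)
          (fun s hs0 hs12 => heatK i hi s hs0 hs12)
        linarith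
      have htot : ∑ k ∈ K, (1 - E.rem k (1/2))
          = ∑ i : Fin n, ∑ k ∈ K, (volume (Set.Ioc (0:ℝ) (1/2)
            ∩ {s | E.eats i s = some k})).toReal := by
        rw [← Finset.sum_comm]
        refine Finset.sum_congr rfl fun k _ => ?_
        rw [E.rem_eq k (by norm_num : (0:ℝ) ≤ 1/2)]
        ring
      -- the set of agents of index ≥ 2
      set I2 : Finset (Fin n) := Finset.univ.filter fun i : Fin n => 2 ≤ (i:ℕ) with hI2
      have hI2card : I2.card = n - 2 := by
        have hft : I2 = Finset.univ \ {(⟨0, by omega⟩ : Fin n), ⟨1, by omega⟩} := by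
          ext i
          simp only [hI2, Finset.mem_filter, Finset.mem_univ, true_and, Finset.mem_sdiff,
            Finset.mem_insert, Finset.mem_singleton, Fin.ext_iff]
          omega
        rw [hft, Finset.card_sdiff_of_subset (Finset.subset_univ _), Finset.card_univ, Fintype.card_fin,
          Finset.card_insert_of_notMem (by simp [Fin.ext_iff]), Finset.card_singleton]
      have hlower : ((n:ℝ) - 2) * (1/2) ≤ ∑ k ∈ K, (1 - E.rem k (1/2)) := by
        rw [htot]
        calc ((n:ℝ) - 2) * (1/2) = ∑ _i ∈ I2, (1:ℝ)/2 := by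
              rw [Finset.sum_const, hI2card, nsmul_eq_mul, Nat.cast_sub (by omega)]
              norm_num
          _ ≤ ∑ i ∈ I2, ∑ k ∈ K, (volume (Set.Ioc (0:ℝ) (1/2)
                ∩ {s | E.eats i s = some k})).toReal := by
              refine Finset.sum_le_sum fun i hi => ?_
              exact hlow i (by simpa [hI2] using hi)
          _ ≤ ∑ i : Fin n, ∑ k ∈ K, (volume (Set.Ioc (0:ℝ) (1/2)
                ∩ {s | E.eats i s = some k})).toReal := by
              refine Finset.sum_le_sum_of_subset_of_nonneg (Finset.subset_univ _)
                fun i _ _ => Finset.sum_nonneg fun k _ => ENNReal.toReal_nonneg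
      have hupper : ∑ k ∈ K, (1 - E.rem k (1/2)) ≤ (K.card : ℝ) := by
        calc ∑ k ∈ K, (1 - E.rem k (1/2)) ≤ ∑ _k ∈ K, (1:ℝ) := by
              refine Finset.sum_le_sum fun k _ => ?_
              have := E.rem_nonneg k (show (0:ℝ) ≤ 1/2 by norm_num)
              linarith
          _ = (K.card : ℝ) := by rw [Finset.sum_const, nsmul_eq_mul, mul_one]
      have hKcard : K.card ≤ (jj:ℕ) := by
        have : K.card ≤ (Finset.Icc 1 (jj:ℕ)).card := by
          refine Finset.card_le_card_of_injOn (fun k => (k:ℕ)) ?_ ?_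
          · intro k hk
            simp only [hK, Finset.mem_filter, Finset.mem_univ, true_and] at hk
            simpa [Finset.mem_Icc] using hk
          · intro a _ b _ hab
            exact Fin.ext hab
        rwa [Nat.card_Icc, Nat.add_sub_cancel] at this
      have hfinal : ((n:ℝ) - 2) * (1/2) ≤ ((n/2 - 2 : ℕ) : ℝ) := by
        have h1 : (K.card : ℝ) ≤ ((jj:ℕ) : ℝ) := by exact_mod_cast hKcard
        have h2 : ((jj:ℕ) : ℝ) ≤ ((n/2 - 2 : ℕ) : ℝ) := by exact_mod_cast hjj2
        linarith
      have hnat : (n - 2 : ℕ) ≤ 2 * (n/2 - 2) := by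
        have hcast : ((n - 2 : ℕ) : ℝ) ≤ 2 * ((n/2 - 2 : ℕ) : ℝ) := by
          rw [Nat.cast_sub (by omega)]
          push_cast
          linarith
        exact_mod_cast hcast
      have hmod : n % 2 = 0 := Nat.even_iff.mp hne
      omega
    -- now the allocation is zero
    have hset : {s : ℝ | 0 < s ∧ E.eats i1 s = some jj} = ∅ := by
      ext s
      simp only [Set.mem_setOf_eq, Set.mem_empty_iff_false, iff_false, not_and]
      intro hs0 heq
      obtain ⟨hpos, hmin⟩ := (E.eats_iff i1 s hs0.le trivial jj).1 heq
      by_cases hs12 : s < 1/2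
      · have hj0pos := hB s hs0.le hs12
        have := hmin j0 hj0pos
        rw [hrk12 i1 hi1le jj, hrk12 i1 hi1le j0, hj0val] at this
        omega
      · push_neg at hs12
        have hmono := E.rem_mono jj (show (0:ℝ) ≤ 1/2 by norm_num) hs12
        rw [hrem_jj] at hmono
        linarith
    rw [PSExec.alloc, hset, measure_empty]
    rfl
  -- PART 3
  refine ⟨part1, part2, ?_⟩
  rw [PSExec.utility]
  have hsum : ∀ j : Fin n,
      dicho (Finset.univ.filter fun j : Fin n => (j : ℕ) ≤ n / 2 - 2) j * E.alloc i1 j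
        = if (j : ℕ) ≤ n / 2 - 2 then E.alloc i1 j else 0 := by
    intro j
    rw [dicho]
    by_cases hj : (j : ℕ) ≤ n / 2 - 2
    · rw [if_pos hj, if_pos (by simp [hj]), one_mul]
    · rw [if_neg hj, if_neg (by simp [hj]), zero_mul]
  rw [Finset.sum_congr rfl fun j _ => hsum j]
  rw [Finset.sum_ite, Finset.sum_const_zero, add_zero]
  have hj0mem : j0 ∈ Finset.univ.filter fun j : Fin n => (j : ℕ) ≤ n / 2 - 2 := by
    simp [hj0val]
  rw [Finset.sum_eq_single_of_mem j0 hj0mem fun b hb hbne => ?_]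
  · exact part1
  · refine part2 b ?_ ?_
    · have : (b:ℕ) ≠ 0 := fun h0 => hbne (Fin.ext (h0.trans hj0val.symm))
      omega
    · simpa using hb
end

section
/- The incentive ratio bound 3/2 for the Probabilistic Serial mechanism is tight: for every ε > 0 there exist n = m, a profile of reported strict orders for agents 2,…,n, cardinal utilities a_{1j} ∈ [0,1] for agent 1, a truthful report for agent 1, and a misreport for agent 1 such that u'_1 / u_1 > 3/2 − ε. -/
open MeasureTheory

namespace IRT

/-- measure of `(0,t] ∩ [α,β)` -/
lemma vol_win (α β t : ℝ) (hα : 0 ≤ α) :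
    (volume {s : ℝ | 0 < s ∧ s ≤ t ∧ α ≤ s ∧ s < β}).toReal = max 0 (min t β - α) := by
  rcases le_or_gt (min t β) α with h | h
  · have hsub : {s : ℝ | 0 < s ∧ s ≤ t ∧ α ≤ s ∧ s < β} ⊆ {α} := by
      intro s hs
      rcases hs with ⟨h0, h1, h2, h3⟩
      have : s ≤ α := le_trans (le_min h1 h3.le) h
      simp [le_antisymm this h2]
    have h0 : volume {s : ℝ | 0 < s ∧ s ≤ t ∧ α ≤ s ∧ s < β} = 0 :=
      measure_mono_null hsub (by simp)
    rw [h0]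
    simp [max_eq_left (by linarith : min t β - α ≤ 0)]
  · have hsub1 : Set.Ioo α (min t β) ⊆ {s : ℝ | 0 < s ∧ s ≤ t ∧ α ≤ s ∧ s < β} := by
      intro s hs
      rcases hs with ⟨h1, h2⟩
      exact ⟨lt_of_le_of_lt hα h1, le_trans h2.le (min_le_left _ _),
        h1.le, lt_of_lt_of_le h2 (min_le_right _ _)⟩
    have hsub2 : {s : ℝ | 0 < s ∧ s ≤ t ∧ α ≤ s ∧ s < β} ⊆ Set.Icc α (min t β) := by
      intro s hs
      exact ⟨hs.2.2.1, le_min hs.2.1 hs.2.2.2.le⟩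
    have hv : volume {s : ℝ | 0 < s ∧ s ≤ t ∧ α ≤ s ∧ s < β} = ENNReal.ofReal (min t β - α) := by
      apply le_antisymm
      · calc volume _ ≤ volume (Set.Icc α (min t β)) := measure_mono hsub2
          _ = ENNReal.ofReal (min t β - α) := by rw [Real.volume_Icc]
      · calc ENNReal.ofReal (min t β - α) = volume (Set.Ioo α (min t β)) := by rw [Real.volume_Ioo]
          _ ≤ _ := measure_mono hsub1
    rw [hv, ENNReal.toReal_ofReal (by linarith)]
    exact (max_eq_right (by linarith)).symm

/-- volume of `{s | 0 < s ∧ α ≤ s ∧ s < β}` for `β ≤ 1`: same as window up to time 1 -/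
lemma vol_win_total (α β : ℝ) (hα : 0 ≤ α) (hβ : β ≤ 1) :
    (volume {s : ℝ | 0 < s ∧ α ≤ s ∧ s < β}).toReal = max 0 (min 1 β - α) := by
  have : {s : ℝ | 0 < s ∧ α ≤ s ∧ s < β} = {s : ℝ | 0 < s ∧ s ≤ (1:ℝ) ∧ α ≤ s ∧ s < β} := by
    ext s; constructor
    · rintro ⟨h0, h1, h2⟩; exact ⟨h0, le_trans h2.le hβ, h1, h2⟩
    · rintro ⟨h0, _, h1, h2⟩; exact ⟨h0, h1, h2⟩
  rw [this, vol_win _ _ _ hα]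

variable {k : ℕ}

open Classical in
/-- the item whose window `[α j, β j)` contains `t`, if any. -/
noncomputable def mkEats (α β : Fin k → ℝ) (t : ℝ) : Option (Fin k) :=
  if h : ∃ j, α j ≤ t ∧ t < β j then some h.choose else none

lemma mkEats_eq_some {α β : Fin k → ℝ}
    (hdisj : ∀ t (j j' : Fin k), α j ≤ t → t < β j → α j' ≤ t → t < β j' → j = j')
    (t : ℝ) (j : Fin k) : mkEats α β t = some j ↔ (α j ≤ t ∧ t < β j) := by
  unfold mkEats
  split_ifs with h
  · constructor
    · intro heq
      have hj : h.choose = j := by injection heq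
      rw [← hj]; exact h.choose_spec
    · intro hw
      have : h.choose = j := hdisj t _ _ h.choose_spec.1 h.choose_spec.2 hw.1 hw.2
      rw [this]
  · constructor
    · intro heq; exact absurd heq (by simp)
    · intro hw; exact absurd ⟨j, hw⟩ h

/-- splitting a sum over `Fin (2p+4)` into agent `0`, agent `1`, and the group. -/
lemma sum_split {p : ℕ} (f : Fin (2*p+4) → ℝ) (c₀ c₁ cG : ℝ)
    (h0 : f ⟨0, by omega⟩ = c₀) (h1 : f ⟨1, by omega⟩ = c₁)
    (hG : ∀ i : Fin (2*p+4), 2 ≤ i.val → f i = cG) :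
    ∑ i, f i = c₀ + c₁ + (2*(p:ℝ)+2) * cG := by
  have key : ∀ i : Fin (2*p+4), f i =
      (if i = ⟨0, by omega⟩ then c₀ - cG else 0) +
      (if i = ⟨1, by omega⟩ then c₁ - cG else 0) + cG := by
    intro i
    by_cases hi0 : i = ⟨0, by omega⟩
    · rw [hi0]
      have hne : (⟨0, by omega⟩ : Fin (2*p+4)) ≠ ⟨1, by omega⟩ := by
        intro hcon
        have : (0:ℕ) = 1 := congrArg Fin.val hcon
        omega
      simp only [if_pos rfl, if_neg hne, h0]; simp
    · by_cases hi1 : i = ⟨1, by omega⟩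
      · rw [hi1]
        have hne : (⟨1, by omega⟩ : Fin (2*p+4)) ≠ ⟨0, by omega⟩ := by
          intro hcon
          have : (1:ℕ) = 0 := congrArg Fin.val hcon
          omega
        simp only [if_pos rfl, if_neg hne, h1]; simp
      · have h2 : 2 ≤ i.val := by
          rcases Nat.lt_or_ge i.val 2 with h | h
          · exfalso
            interval_cases hi : i.val
            · exact hi0 (Fin.ext hi)
            · exact hi1 (Fin.ext hi)
          · exact h
        simp only [if_neg hi0, if_neg hi1, hG i h2]; ring
  rw [Finset.sum_congr rfl (fun i _ => key i)]
  rw [Finset.sum_add_distrib, Finset.sum_add_distrib]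
  rw [Finset.sum_ite_eq' Finset.univ, Finset.sum_ite_eq' Finset.univ]
  simp [Finset.card_univ]
  push_cast
  ring

end IRT

namespace IRT
section Inst
variable (p : ℕ)

/-! ### The instance: `n = m = 2p+4`.
Items: `A = 0`, `B = 1`, pool items `2..p+1`, sink items `p+2..2p+2`, last sink `2p+3`.
Agents: `0` = manipulator, `1` = rival (eats A then last sink),
`2..2p+3` = group (eats pool, then B, then sink items in order, never A). -/

noncomputable def g : ℝ := 2*(p:ℝ)+2
noncomputable def dd : ℝ := (p:ℝ)/(2*(p:ℝ)+2)
noncomputable def t2 : ℝ := ((p:ℝ)+1)/(2*(p:ℝ)+3)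
noncomputable def Tm : ℝ := (3*(p:ℝ)+4)/(4*(p:ℝ)+6)
noncomputable def t3 : ℝ := t2 p + 1/2

lemma f_g : 0 < g p := by unfold g; positivity
lemma f_gdd : g p * dd p = (p:ℝ) := by
  unfold g dd; field_simp
lemma f_dd0 : 0 ≤ dd p := by unfold dd; positivity
lemma f_t2_pos : 0 < t2 p := by unfold t2; positivity
lemma f_dd_lt : dd p < t2 p := by
  unfold dd t2
  rw [div_lt_div_iff₀ (by positivity) (by positivity)]
  nlinarith [Nat.cast_nonneg (α := ℝ) p]
lemma f_t2_half : t2 p < 1/2 := by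
  unfold t2
  rw [div_lt_div_iff₀ (by positivity) (by norm_num)]
  nlinarith [Nat.cast_nonneg (α := ℝ) p]
lemma f_Tm2 : 2 * Tm p = 1 + t2 p := by
  unfold Tm t2; field_simp; ring
lemma f_t2_Tm : t2 p < Tm p := by
  have h1 := f_t2_half p
  have := f_Tm2 p
  linarith
lemma f_Tm_t3 : Tm p < t3 p := by
  have := f_Tm2 p
  have := f_t2_pos p
  unfold t3; linarith
lemma f_t3_lt1 : t3 p < 1 := by
  have := f_t2_half p; unfold t3; linarith
lemma f_Bdeath : t2 p + g p * (t2 p - dd p) = 1 := by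
  unfold t2 g dd; field_simp; ring
lemma f_last : 2*(1 - Tm p) + g p * (1 - t3 p) = 1 := by
  unfold Tm g t3 t2; field_simp; ring
lemma f_ghalf : g p * (1/2) = (p:ℝ) + 1 := by unfold g; ring
lemma f_dd_half : dd p < 1/2 := by
  have h := f_dd_lt p; have := f_t2_half p; linarith
lemma f_Tm_lt1 : Tm p < 1 := by
  have := f_Tm2 p; have := f_t2_half p; linarith
lemma f_Tm_pos : 0 < Tm p := by
  have := f_Tm2 p; have := f_t2_pos p; linarith

/-! ### windows -/

noncomputable def αPT (j : Fin (2*p+4)) : ℝ :=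
  if j.val = 0 then 0 else if j.val = 2*p+3 then 1/2 else 0
noncomputable def βPT (j : Fin (2*p+4)) : ℝ :=
  if j.val = 0 then 1/2 else if j.val = 2*p+3 then 1 else 0

noncomputable def αGT (j : Fin (2*p+4)) : ℝ :=
  if j.val = 0 then 0 else if j.val = 1 then dd p
  else if j.val ≤ p+1 then ((j.val:ℝ)-2)/g p
  else if j.val ≤ 2*p+2 then 1/2 + ((j.val:ℝ)-((p:ℝ)+2))/g p else 0
noncomputable def βGT (j : Fin (2*p+4)) : ℝ :=
  if j.val = 0 then 0 else if j.val = 1 then 1/2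
  else if j.val ≤ p+1 then ((j.val:ℝ)-1)/g p
  else if j.val ≤ 2*p+2 then 1/2 + ((j.val:ℝ)-((p:ℝ)+1))/g p else 0

noncomputable def α0M (j : Fin (2*p+4)) : ℝ :=
  if j.val = 0 then t2 p else if j.val = 1 then 0
  else if j.val = 2*p+3 then Tm p else 0
noncomputable def β0M (j : Fin (2*p+4)) : ℝ :=
  if j.val = 0 then Tm p else if j.val = 1 then t2 p
  else if j.val = 2*p+3 then 1 else 0

noncomputable def α1M (j : Fin (2*p+4)) : ℝ :=
  if j.val = 0 then 0 else if j.val = 2*p+3 then Tm p else 0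
noncomputable def β1M (j : Fin (2*p+4)) : ℝ :=
  if j.val = 0 then Tm p else if j.val = 2*p+3 then 1 else 0

noncomputable def αGM (j : Fin (2*p+4)) : ℝ :=
  if j.val = 0 then 0 else if j.val = 1 then dd p
  else if j.val ≤ p+1 then ((j.val:ℝ)-2)/g p
  else if j.val ≤ 2*p+2 then t2 p + ((j.val:ℝ)-((p:ℝ)+2))/g p else t3 p
noncomputable def βGM (j : Fin (2*p+4)) : ℝ :=
  if j.val = 0 then 0 else if j.val = 1 then t2 p
  else if j.val ≤ p+1 then ((j.val:ℝ)-1)/g p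
  else if j.val ≤ 2*p+2 then t2 p + ((j.val:ℝ)-((p:ℝ)+1))/g p else 1

/-! ### death times -/

noncomputable def τT (j : Fin (2*p+4)) : ℝ :=
  if j.val = 0 then 1/2 else if j.val = 1 then 1/2
  else if j.val ≤ p+1 then ((j.val:ℝ)-1)/g p
  else if j.val ≤ 2*p+2 then 1/2 + ((j.val:ℝ)-((p:ℝ)+1))/g p else 1
noncomputable def τM (j : Fin (2*p+4)) : ℝ :=
  if j.val = 0 then Tm p else if j.val = 1 then t2 p
  else if j.val ≤ p+1 then ((j.val:ℝ)-1)/g p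
  else if j.val ≤ 2*p+2 then t2 p + ((j.val:ℝ)-((p:ℝ)+1))/g p else 1

/-! ### remaining supplies -/

noncomputable def remT (j : Fin (2*p+4)) (t : ℝ) : ℝ :=
  1 - 2*max 0 (min t (βPT p j) - αPT p j) - g p * max 0 (min t (βGT p j) - αGT p j)
noncomputable def remM (j : Fin (2*p+4)) (t : ℝ) : ℝ :=
  1 - max 0 (min t (β0M p j) - α0M p j) - max 0 (min t (β1M p j) - α1M p j)
    - g p * max 0 (min t (βGM p j) - αGM p j)

/-! ### ranks -/

def rk0T (j : Fin (2*p+4)) : ℕ :=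
  if j.val = 0 then 0 else if j.val = 1 then 1
  else if j.val ≤ p+1 then j.val+p+2 else 2*p+5-j.val
def rk0M (j : Fin (2*p+4)) : ℕ :=
  if j.val = 0 then 1 else if j.val = 1 then 0
  else if j.val ≤ p+1 then j.val+p+2 else 2*p+5-j.val
def rk1 (j : Fin (2*p+4)) : ℕ :=
  if j.val = 0 then 0 else if j.val = 1 then p+3
  else if j.val ≤ p+1 then j.val+p+2 else 2*p+4-j.val
def rkG (j : Fin (2*p+4)) : ℕ :=
  if j.val = 0 then 2*p+3 else if j.val = 1 then p
  else if j.val ≤ p+1 then j.val-2 else j.val-1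

lemma rk0T_inj : Function.Injective (rk0T p) := by
  intro j j' h
  have h1 := j.isLt; have h2 := j'.isLt
  simp only [rk0T] at h
  apply Fin.ext
  split_ifs at h <;> omega
lemma rk0M_inj : Function.Injective (rk0M p) := by
  intro j j' h
  have h1 := j.isLt; have h2 := j'.isLt
  simp only [rk0M] at h
  apply Fin.ext
  split_ifs at h <;> omega
lemma rk1_inj : Function.Injective (rk1 p) := by
  intro j j' h
  have h1 := j.isLt; have h2 := j'.isLt
  simp only [rk1] at h
  apply Fin.ext
  split_ifs at h <;> omega
lemma rkG_inj : Function.Injective (rkG p) := by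
  intro j j' h
  have h1 := j.isLt; have h2 := j'.isLt
  simp only [rkG] at h
  apply Fin.ext
  split_ifs at h <;> omega

end Inst
end IRT

namespace IRT

/-- Generic criterion: an item eaten in (up to) three windows, with total 1,
is alive iff `t < τ`. -/
lemma alive_iff (c₁ c₂ c₃ α₁ β₁ α₂ β₂ α₃ β₃ τ t : ℝ)
    (hc₁ : 0 ≤ c₁) (hc₂ : 0 ≤ c₂) (hc₃ : 0 ≤ c₃)
    (hw₁ : α₁ ≤ β₁) (hw₂ : α₂ ≤ β₂) (hw₃ : α₃ ≤ β₃)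
    (hβ₁ : β₁ ≤ τ) (hβ₂ : β₂ ≤ τ) (hβ₃ : β₃ ≤ τ)
    (htot : c₁*(β₁-α₁) + c₂*(β₂-α₂) + c₃*(β₃-α₃) = 1)
    (hL : (β₁ = τ ∧ α₁ < τ ∧ 0 < c₁) ∨ (β₂ = τ ∧ α₂ < τ ∧ 0 < c₂) ∨
          (β₃ = τ ∧ α₃ < τ ∧ 0 < c₃)) :
    (0 < 1 - c₁ * max 0 (min t β₁ - α₁) - c₂ * max 0 (min t β₂ - α₂)
      - c₃ * max 0 (min t β₃ - α₃)) ↔ t < τ := by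
  have term_le : ∀ c α β : ℝ, 0 ≤ c → α ≤ β →
      c * max 0 (min t β - α) ≤ c * (β - α) := by
    intro c α β hc hw
    apply mul_le_mul_of_nonneg_left _ hc
    apply max_le (by linarith)
    have : min t β ≤ β := min_le_right _ _
    linarith
  constructor
  · intro hpos
    by_contra hge
    push_neg at hge
    have e₁ : min t β₁ = β₁ := min_eq_right (le_trans hβ₁ hge)
    have e₂ : min t β₂ = β₂ := min_eq_right (le_trans hβ₂ hge)
    have e₃ : min t β₃ = β₃ := min_eq_right (le_trans hβ₃ hge)
    rw [e₁, e₂, e₃] at hpos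
    rw [max_eq_right (by linarith), max_eq_right (by linarith),
      max_eq_right (by linarith)] at hpos
    linarith
  · intro ht
    have h₁ := term_le c₁ α₁ β₁ hc₁ hw₁
    have h₂ := term_le c₂ α₂ β₂ hc₂ hw₂
    have h₃ := term_le c₃ α₃ β₃ hc₃ hw₃
    have term_lt : ∀ c α β : ℝ, 0 < c → α < τ → β = τ →
        c * max 0 (min t β - α) < c * (β - α) := by
      intro c α β hc hα hβ
      apply mul_lt_mul_of_pos_left _ hc
      subst hβ
      rcases le_or_gt t α with h | h
      · have h4 : min t β ≤ α := le_trans (min_le_left _ _) h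
        have h5 : max 0 (min t β - α) = 0 := max_eq_left (by linarith)
        rw [h5]; linarith
      · have h5 : min t β - α < β - α := by
          have : min t β ≤ t := min_le_left _ _
          linarith
        exact max_lt (by linarith) h5
    rcases hL with ⟨hb, ha, hc⟩ | ⟨hb, ha, hc⟩ | ⟨hb, ha, hc⟩
    · have := term_lt c₁ α₁ β₁ hc ha hb; linarith
    · have := term_lt c₂ α₂ β₂ hc ha hb; linarith
    · have := term_lt c₃ α₃ β₃ hc ha hb; linarith

section Inst
variable (p : ℕ)

lemma icases (j : Fin (2*p+4)) : j.val = 0 ∨ j.val = 1 ∨ (2 ≤ j.val ∧ j.val ≤ p+1)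
    ∨ (p+2 ≤ j.val ∧ j.val ≤ 2*p+2) ∨ j.val = 2*p+3 := by
  have := j.isLt; omega

lemma remT_pos_iff (j : Fin (2*p+4)) (t : ℝ) : 0 < remT p j t ↔ t < τT p j := by
  have hg := f_g p
  have hdd0 := f_dd0 p
  have hddh := f_dd_half p
  rcases icases p j with hv | hv | ⟨hv2, hvP⟩ | ⟨hvS, hvS'⟩ | hv
  · -- A
    have eτ : τT p j = 1/2 := by simp only [τT, if_pos hv]
    have erem : remT p j t = 1 - 2 * max 0 (min t (1/2) - 0)
        - g p * max 0 (min t 0 - 0) - 0 * max 0 (min t 0 - 0) := by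
      simp only [remT, αPT, βPT, αGT, βGT, if_pos hv]; ring
    rw [erem, eτ]
    apply alive_iff
    · norm_num
    · exact hg.le
    · exact le_rfl
    · norm_num
    · exact le_rfl
    · exact le_rfl
    · norm_num
    · norm_num
    · norm_num
    · ring
    · exact Or.inl ⟨rfl, by norm_num, by norm_num⟩
  · -- B
    have h0 : ¬ j.val = 0 := by omega
    have eτ : τT p j = 1/2 := by simp only [τT, if_neg h0, if_pos hv]
    have erem : remT p j t = 1 - 2 * max 0 (min t 0 - 0)
        - g p * max 0 (min t (1/2) - dd p) - 0 * max 0 (min t 0 - 0) := by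
      simp only [remT, αPT, βPT, αGT, βGT, if_neg h0, if_pos hv,
        if_neg (show ¬ j.val = 2*p+3 by omega)]; ring
    rw [erem, eτ]
    have hgdd := f_gdd p
    apply alive_iff
    · norm_num
    · exact hg.le
    · exact le_rfl
    · exact le_rfl
    · linarith
    · exact le_rfl
    · norm_num
    · exact le_rfl
    · norm_num
    · have : g p = 2*(p:ℝ)+2 := rfl
      nlinarith
    · exact Or.inr (Or.inl ⟨rfl, by linarith, hg⟩)
  · -- pool
    have h0 : ¬ j.val = 0 := by omega
    have h1 : ¬ j.val = 1 := by omega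
    have h3 : ¬ j.val = 2*p+3 := by omega
    have hr2 : (2:ℝ) ≤ (j.val:ℝ) := by exact_mod_cast hv2
    have eτ : τT p j = ((j.val:ℝ)-1)/g p := by
      simp only [τT, if_neg h0, if_neg h1, if_pos hvP]
    have erem : remT p j t = 1 - 2 * max 0 (min t 0 - 0)
        - g p * max 0 (min t (((j.val:ℝ)-1)/g p) - ((j.val:ℝ)-2)/g p)
        - 0 * max 0 (min t 0 - 0) := by
      simp only [remT, αPT, βPT, αGT, βGT, if_neg h0, if_neg h1, if_pos hvP, if_neg h3]; ring
    rw [erem, eτ]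
    have hαβ : ((j.val:ℝ)-2)/g p < ((j.val:ℝ)-1)/g p := by
      apply div_lt_div_of_pos_right (by linarith) hg
    have hα0 : (0:ℝ) ≤ ((j.val:ℝ)-2)/g p := by
      apply div_nonneg (by linarith) hg.le
    apply alive_iff
    · norm_num
    · exact hg.le
    · exact le_rfl
    · exact le_rfl
    · exact hαβ.le
    · exact le_rfl
    · linarith
    · exact le_rfl
    · linarith
    · field_simp; ring_nf
    · exact Or.inr (Or.inl ⟨rfl, hαβ, hg⟩)
  · -- sink, not last
    have h0 : ¬ j.val = 0 := by omega
    have h1 : ¬ j.val = 1 := by omega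
    have hP : ¬ j.val ≤ p+1 := by omega
    have hS : j.val ≤ 2*p+2 := hvS'
    have h3 : ¬ j.val = 2*p+3 := by omega
    have hr2 : ((p:ℝ)+2) ≤ (j.val:ℝ) := by exact_mod_cast hvS
    have eτ : τT p j = 1/2 + ((j.val:ℝ)-((p:ℝ)+1))/g p := by
      simp only [τT, if_neg h0, if_neg h1, if_neg hP, if_pos hS]
    have erem : remT p j t = 1 - 2 * max 0 (min t 0 - 0)
        - g p * max 0 (min t (1/2 + ((j.val:ℝ)-((p:ℝ)+1))/g p)
            - (1/2 + ((j.val:ℝ)-((p:ℝ)+2))/g p))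
        - 0 * max 0 (min t 0 - 0) := by
      simp only [remT, αPT, βPT, αGT, βGT, if_neg h0, if_neg h1, if_neg hP, if_pos hS,
        if_neg h3]; ring
    rw [erem, eτ]
    have hαβ : 1/2 + ((j.val:ℝ)-((p:ℝ)+2))/g p < 1/2 + ((j.val:ℝ)-((p:ℝ)+1))/g p := by
      have := div_lt_div_of_pos_right (show (j.val:ℝ)-((p:ℝ)+2) < (j.val:ℝ)-((p:ℝ)+1) by linarith) hg
      linarith
    have hα0 : (0:ℝ) ≤ 1/2 + ((j.val:ℝ)-((p:ℝ)+2))/g p := by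
      have : (0:ℝ) ≤ ((j.val:ℝ)-((p:ℝ)+2))/g p := div_nonneg (by linarith) hg.le
      linarith
    apply alive_iff
    · norm_num
    · exact hg.le
    · exact le_rfl
    · exact le_rfl
    · exact hαβ.le
    · exact le_rfl
    · linarith
    · exact le_rfl
    · linarith
    · field_simp; ring_nf
    · exact Or.inr (Or.inl ⟨rfl, hαβ, hg⟩)
  · -- last sink
    have h0 : ¬ j.val = 0 := by omega
    have h1 : ¬ j.val = 1 := by omega
    have hP : ¬ j.val ≤ p+1 := by omega
    have hS : ¬ j.val ≤ 2*p+2 := by omega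
    have eτ : τT p j = 1 := by
      simp only [τT, if_neg h0, if_neg h1, if_neg hP, if_neg hS]
    have erem : remT p j t = 1 - 2 * max 0 (min t 1 - 1/2)
        - g p * max 0 (min t 0 - 0) - 0 * max 0 (min t 0 - 0) := by
      simp only [remT, αPT, βPT, αGT, βGT, if_neg h0, if_neg h1, if_neg hP, if_neg hS,
        if_pos hv]; ring
    rw [erem, eτ]
    apply alive_iff
    · norm_num
    · exact hg.le
    · exact le_rfl
    · norm_num
    · exact le_rfl
    · exact le_rfl
    · norm_num
    · norm_num
    · norm_num
    · ring
    · exact Or.inl ⟨rfl, by norm_num, by norm_num⟩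

lemma remM_pos_iff (j : Fin (2*p+4)) (t : ℝ) : 0 < remM p j t ↔ t < τM p j := by
  have hg := f_g p
  have hdd0 := f_dd0 p
  have hddlt := f_dd_lt p
  have ht2 := f_t2_pos p
  have ht2T := f_t2_Tm p
  have hTm1 := f_Tm_lt1 p
  have hTm2 := f_Tm2 p
  have ht3 := f_Tm_t3 p
  have ht31 := f_t3_lt1 p
  rcases icases p j with hv | hv | ⟨hv2, hvP⟩ | ⟨hvS, hvS'⟩ | hv
  · -- A : agent0 on [t2,Tm), agent1 on [0,Tm)
    have eτ : τM p j = Tm p := by simp only [τM, if_pos hv]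
    have erem : remM p j t = 1 - 1 * max 0 (min t (Tm p) - t2 p)
        - 1 * max 0 (min t (Tm p) - 0) - g p * max 0 (min t 0 - 0) := by
      simp only [remM, α0M, β0M, α1M, β1M, αGM, βGM, if_pos hv]; ring
    rw [erem, eτ]
    apply alive_iff
    · norm_num
    · norm_num
    · exact hg.le
    · linarith
    · linarith
    · exact le_rfl
    · exact le_rfl
    · exact le_rfl
    · linarith
    · linarith
    · exact Or.inl ⟨rfl, ht2T, by norm_num⟩
  · -- B : agent0 on [0,t2), group on [dd,t2)
    have h0 : ¬ j.val = 0 := by omega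
    have h3 : ¬ j.val = 2*p+3 := by omega
    have eτ : τM p j = t2 p := by simp only [τM, if_neg h0, if_pos hv]
    have erem : remM p j t = 1 - 1 * max 0 (min t (t2 p) - 0)
        - 1 * max 0 (min t 0 - 0) - g p * max 0 (min t (t2 p) - dd p) := by
      simp only [remM, α0M, β0M, α1M, β1M, αGM, βGM, if_neg h0, if_pos hv, if_neg h3]; ring
    rw [erem, eτ]
    have hBd := f_Bdeath p
    apply alive_iff
    · norm_num
    · norm_num
    · exact hg.le
    · linarith
    · exact le_rfl
    · linarith
    · exact le_rfl
    · linarith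
    · exact le_rfl
    · linarith
    · exact Or.inl ⟨rfl, ht2, by norm_num⟩
  · -- pool
    have h0 : ¬ j.val = 0 := by omega
    have h1 : ¬ j.val = 1 := by omega
    have h3 : ¬ j.val = 2*p+3 := by omega
    have hr2 : (2:ℝ) ≤ (j.val:ℝ) := by exact_mod_cast hv2
    have eτ : τM p j = ((j.val:ℝ)-1)/g p := by
      simp only [τM, if_neg h0, if_neg h1, if_pos hvP]
    have erem : remM p j t = 1 - 1 * max 0 (min t 0 - 0)
        - 1 * max 0 (min t 0 - 0)
        - g p * max 0 (min t (((j.val:ℝ)-1)/g p) - ((j.val:ℝ)-2)/g p) := by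
      simp only [remM, α0M, β0M, α1M, β1M, αGM, βGM, if_neg h0, if_neg h1, if_pos hvP,
        if_neg h3]; ring
    rw [erem, eτ]
    have hαβ : ((j.val:ℝ)-2)/g p < ((j.val:ℝ)-1)/g p := by
      apply div_lt_div_of_pos_right (by linarith) hg
    have hα0 : (0:ℝ) ≤ ((j.val:ℝ)-2)/g p := by
      apply div_nonneg (by linarith) hg.le
    apply alive_iff
    · norm_num
    · norm_num
    · exact hg.le
    · exact le_rfl
    · exact le_rfl
    · exact hαβ.le
    · linarith
    · linarith
    · exact le_rfl
    · field_simp; ring_nf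
    · exact Or.inr (Or.inr ⟨rfl, hαβ, hg⟩)
  · -- sink, not last
    have h0 : ¬ j.val = 0 := by omega
    have h1 : ¬ j.val = 1 := by omega
    have hP : ¬ j.val ≤ p+1 := by omega
    have hS : j.val ≤ 2*p+2 := hvS'
    have h3 : ¬ j.val = 2*p+3 := by omega
    have hr2 : ((p:ℝ)+2) ≤ (j.val:ℝ) := by exact_mod_cast hvS
    have eτ : τM p j = t2 p + ((j.val:ℝ)-((p:ℝ)+1))/g p := by
      simp only [τM, if_neg h0, if_neg h1, if_neg hP, if_pos hS]
    have erem : remM p j t = 1 - 1 * max 0 (min t 0 - 0)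
        - 1 * max 0 (min t 0 - 0)
        - g p * max 0 (min t (t2 p + ((j.val:ℝ)-((p:ℝ)+1))/g p)
            - (t2 p + ((j.val:ℝ)-((p:ℝ)+2))/g p)) := by
      simp only [remM, α0M, β0M, α1M, β1M, αGM, βGM, if_neg h0, if_neg h1, if_neg hP,
        if_pos hS, if_neg h3]; ring
    rw [erem, eτ]
    have hαβ : t2 p + ((j.val:ℝ)-((p:ℝ)+2))/g p < t2 p + ((j.val:ℝ)-((p:ℝ)+1))/g p := by
      have := div_lt_div_of_pos_right (show (j.val:ℝ)-((p:ℝ)+2) < (j.val:ℝ)-((p:ℝ)+1) by linarith) hg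
      linarith
    have hα0 : (0:ℝ) ≤ t2 p + ((j.val:ℝ)-((p:ℝ)+2))/g p := by
      have : (0:ℝ) ≤ ((j.val:ℝ)-((p:ℝ)+2))/g p := div_nonneg (by linarith) hg.le
      linarith
    apply alive_iff
    · norm_num
    · norm_num
    · exact hg.le
    · exact le_rfl
    · exact le_rfl
    · exact hαβ.le
    · linarith
    · linarith
    · exact le_rfl
    · field_simp; ring_nf
    · exact Or.inr (Or.inr ⟨rfl, hαβ, hg⟩)
  · -- last sink : agents 0,1 on [Tm,1), group on [t3,1)
    have h0 : ¬ j.val = 0 := by omega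
    have h1 : ¬ j.val = 1 := by omega
    have hP : ¬ j.val ≤ p+1 := by omega
    have hS : ¬ j.val ≤ 2*p+2 := by omega
    have eτ : τM p j = 1 := by
      simp only [τM, if_neg h0, if_neg h1, if_neg hP, if_neg hS]
    have erem : remM p j t = 1 - 1 * max 0 (min t 1 - Tm p)
        - 1 * max 0 (min t 1 - Tm p) - g p * max 0 (min t 1 - t3 p) := by
      simp only [remM, α0M, β0M, α1M, β1M, αGM, βGM, if_neg h0, if_neg h1, if_neg hP,
        if_neg hS, if_pos hv]; ring
    rw [erem, eτ]
    have hlast := f_last p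
    apply alive_iff
    · norm_num
    · norm_num
    · exact hg.le
    · linarith
    · linarith
    · linarith
    · exact le_rfl
    · exact le_rfl
    · exact le_rfl
    · linarith
    · exact Or.inl ⟨rfl, by linarith, by norm_num⟩

end Inst
end IRT

namespace IRT
section Inst
variable (p : ℕ)

/-! ### division helpers -/

lemma divg_le_divg {a b : ℝ} (h : a ≤ b) : a / g p ≤ b / g p := by
  have hg := f_g p
  have := mul_le_mul_of_nonneg_right h (le_of_lt (inv_pos.mpr hg))
  simpa [div_eq_mul_inv] using this

lemma divg_lt_divg {a b : ℝ} (h : a < b) : a / g p < b / g p :=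
  div_lt_div_of_pos_right h (f_g p)

lemma lt_of_divg_lt {a b : ℝ} (h : a / g p < b / g p) : a < b := by
  by_contra hcon
  push_neg at hcon
  exact absurd (divg_le_divg p hcon) (not_le.mpr h)

lemma f_p_div_g : (p:ℝ) / g p = dd p := rfl

lemma f_p1_div_g : ((p:ℝ)+1) / g p = 1/2 := by
  have hg := (f_g p).ne'
  rw [div_eq_iff hg]
  show ((p:ℝ)+1) = 1/2 * (2*(p:ℝ)+2)
  ring

/-! ### schedule PT (agents 0 and 1 in the truthful run) -/

lemma PT_key (t : ℝ) (j : Fin (2*p+4)) (h1 : αPT p j ≤ t) (h2 : t < βPT p j) :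
    (j.val = 0 ∧ 0 ≤ t ∧ t < 1/2) ∨ (j.val = 2*p+3 ∧ 1/2 ≤ t ∧ t < 1) := by
  simp only [αPT, βPT] at h1 h2
  by_cases e0 : j.val = 0
  · rw [if_pos e0] at h1 h2; exact Or.inl ⟨e0, h1, h2⟩
  · by_cases e3 : j.val = 2*p+3
    · rw [if_neg e0, if_pos e3] at h1 h2; exact Or.inr ⟨e3, h1, h2⟩
    · rw [if_neg e0, if_neg e3] at h1 h2; linarith

lemma αPT_nonneg (j : Fin (2*p+4)) : 0 ≤ αPT p j := by
  unfold αPT; split_ifs <;> norm_num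

lemma βPT_le_τT (j : Fin (2*p+4)) : βPT p j ≤ τT p j := by
  have hg := f_g p
  have hτ : 0 ≤ τT p j := by
    unfold τT
    rcases icases p j with hv | hv | ⟨hv2, hvP⟩ | ⟨hvS, hvS'⟩ | hv
    · rw [if_pos hv]; norm_num
    · rw [if_neg (by omega), if_pos hv]; norm_num
    · rw [if_neg (by omega), if_neg (by omega), if_pos hvP]
      have hr2 : (2:ℝ) ≤ (j.val:ℝ) := by exact_mod_cast hv2
      exact div_nonneg (by linarith) hg.le
    · rw [if_neg (by omega), if_neg (by omega), if_neg (by omega), if_pos hvS']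
      have hr2 : ((p:ℝ)+2) ≤ (j.val:ℝ) := by exact_mod_cast hvS
      have : (0:ℝ) ≤ ((j.val:ℝ)-((p:ℝ)+1))/g p := div_nonneg (by linarith) hg.le
      linarith
    · rw [if_neg (by omega), if_neg (by omega), if_neg (by omega), if_neg (by omega)]
      norm_num
  unfold βPT
  by_cases e0 : j.val = 0
  · rw [if_pos e0]
    unfold τT; rw [if_pos e0]
  · by_cases e3 : j.val = 2*p+3
    · rw [if_neg e0, if_pos e3]
      unfold τT
      rw [if_neg e0, if_neg (by omega), if_neg (by omega), if_neg (by omega)]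
    · rw [if_neg e0, if_neg e3]; exact hτ

lemma PT_disj (t : ℝ) (j j' : Fin (2*p+4)) (h1 : αPT p j ≤ t) (h2 : t < βPT p j)
    (h1' : αPT p j' ≤ t) (h2' : t < βPT p j') : j = j' := by
  rcases PT_key p t j h1 h2 with ⟨e, he⟩ | ⟨e, he⟩ <;>
    rcases PT_key p t j' h1' h2' with ⟨e', he'⟩ | ⟨e', he'⟩
  · exact Fin.ext (by omega)
  · linarith [he.2, he'.1]
  · linarith [he.1, he'.2]
  · exact Fin.ext (by omega)

lemma PT_cov (t : ℝ) (h0 : 0 ≤ t) (h1 : t < 1) :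
    ∃ j : Fin (2*p+4), αPT p j ≤ t ∧ t < βPT p j := by
  rcases lt_or_ge t (1/2) with h | h
  · refine ⟨⟨0, by omega⟩, ?_, ?_⟩ <;> simp only [αPT, βPT, if_pos rfl] <;> assumption
  · have hne : ¬ (⟨2*p+3, by omega⟩ : Fin (2*p+4)).val = 0 := by simp
    refine ⟨⟨2*p+3, by omega⟩, ?_, ?_⟩ <;>
      simp only [αPT, βPT, if_neg hne, if_pos rfl] <;> assumption

/-- pool items die by time `dd p`; helper -/
lemma pool_dead (t : ℝ) (j' : Fin (2*p+4)) (hv2 : 2 ≤ j'.val) (hvP : j'.val ≤ p+1)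
    (h' : t < τT p j') : t < dd p := by
  unfold τT at h'
  rw [if_neg (by omega), if_neg (by omega), if_pos hvP] at h'
  have hr2 : ((j'.val:ℝ)-1) ≤ (p:ℝ) := by
    have : (j'.val:ℝ) ≤ (p:ℝ)+1 := by exact_mod_cast hvP
    linarith
  have := divg_le_divg p hr2
  rw [f_p_div_g] at this
  linarith

lemma pool_deadM (t : ℝ) (j' : Fin (2*p+4)) (hv2 : 2 ≤ j'.val) (hvP : j'.val ≤ p+1)
    (h' : t < τM p j') : t < dd p := by
  unfold τM at h'
  rw [if_neg (by omega), if_neg (by omega), if_pos hvP] at h'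
  have hr2 : ((j'.val:ℝ)-1) ≤ (p:ℝ) := by
    have : (j'.val:ℝ) ≤ (p:ℝ)+1 := by exact_mod_cast hvP
    linarith
  have := divg_le_divg p hr2
  rw [f_p_div_g] at this
  linarith

/-- minimality for agent 0 (truth) on schedule PT -/
lemma PT_min0 (t : ℝ) (ht : 0 ≤ t) (j j' : Fin (2*p+4)) (h1 : αPT p j ≤ t)
    (h2 : t < βPT p j) (h' : t < τT p j') : rk0T p j ≤ rk0T p j' := by
  have hdd := f_dd_half p
  rcases PT_key p t j h1 h2 with ⟨e, he⟩ | ⟨e, he⟩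
  · simp only [rk0T, if_pos e]; exact Nat.zero_le _
  · have hrj : rk0T p j = 2 := by
      simp only [rk0T, if_neg (show ¬j.val = 0 by omega), if_neg (show ¬j.val = 1 by omega),
        if_neg (show ¬j.val ≤ p+1 by omega)]
      omega
    rw [hrj]
    rcases icases p j' with hv' | hv' | ⟨hv2', hvP'⟩ | ⟨hvS', hvS''⟩ | hv'
    · unfold τT at h'; rw [if_pos hv'] at h'; linarith [he.1]
    · unfold τT at h'; rw [if_neg (by omega), if_pos hv'] at h'; linarith [he.1]
    · have := pool_dead p t j' hv2' hvP' h'; linarith [he.1]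
    · simp only [rk0T, if_neg (show ¬j'.val = 0 by omega), if_neg (show ¬j'.val = 1 by omega),
        if_neg (show ¬j'.val ≤ p+1 by omega)]
      omega
    · simp only [rk0T, if_neg (show ¬j'.val = 0 by omega), if_neg (show ¬j'.val = 1 by omega),
        if_neg (show ¬j'.val ≤ p+1 by omega)]
      omega

/-- minimality for agent 1 (truth) on schedule PT -/
lemma PT_min1 (t : ℝ) (ht : 0 ≤ t) (j j' : Fin (2*p+4)) (h1 : αPT p j ≤ t)
    (h2 : t < βPT p j) (h' : t < τT p j') : rk1 p j ≤ rk1 p j' := by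
  have hdd := f_dd_half p
  rcases PT_key p t j h1 h2 with ⟨e, he⟩ | ⟨e, he⟩
  · simp only [rk1, if_pos e]; exact Nat.zero_le _
  · have hrj : rk1 p j = 1 := by
      simp only [rk1, if_neg (show ¬j.val = 0 by omega), if_neg (show ¬j.val = 1 by omega),
        if_neg (show ¬j.val ≤ p+1 by omega)]
      omega
    rw [hrj]
    rcases icases p j' with hv' | hv' | ⟨hv2', hvP'⟩ | ⟨hvS', hvS''⟩ | hv'
    · unfold τT at h'; rw [if_pos hv'] at h'; linarith [he.1]
    · simp only [rk1, if_neg (show ¬j'.val = 0 by omega), if_pos hv']; omega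
    · have := pool_dead p t j' hv2' hvP' h'; linarith [he.1]
    · simp only [rk1, if_neg (show ¬j'.val = 0 by omega), if_neg (show ¬j'.val = 1 by omega),
        if_neg (show ¬j'.val ≤ p+1 by omega)]
      omega
    · simp only [rk1, if_neg (show ¬j'.val = 0 by omega), if_neg (show ¬j'.val = 1 by omega),
        if_neg (show ¬j'.val ≤ p+1 by omega)]
      omega

end Inst
end IRT

namespace IRT
section Inst
variable (p : ℕ)

lemma τM_nonneg (j : Fin (2*p+4)) : 0 ≤ τM p j := by
  have hg := f_g p
  unfold τM
  rcases icases p j with hv | hv | ⟨hv2, hvP⟩ | ⟨hvS, hvS'⟩ | hv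
  · rw [if_pos hv]; exact (f_Tm_pos p).le
  · rw [if_neg (by omega), if_pos hv]; exact (f_t2_pos p).le
  · rw [if_neg (by omega), if_neg (by omega), if_pos hvP]
    have hr2 : (2:ℝ) ≤ (j.val:ℝ) := by exact_mod_cast hv2
    exact div_nonneg (by linarith) hg.le
  · rw [if_neg (by omega), if_neg (by omega), if_neg (by omega), if_pos hvS']
    have hr2 : ((p:ℝ)+2) ≤ (j.val:ℝ) := by exact_mod_cast hvS
    have : (0:ℝ) ≤ ((j.val:ℝ)-((p:ℝ)+1))/g p := div_nonneg (by linarith) hg.le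
    have := (f_t2_pos p).le
    linarith
  · rw [if_neg (by omega), if_neg (by omega), if_neg (by omega), if_neg (by omega)]
    norm_num

/-! ### schedule 0M (agent 0, misreport): B then A then last sink -/

lemma M0_key (t : ℝ) (j : Fin (2*p+4)) (h1 : α0M p j ≤ t) (h2 : t < β0M p j) :
    (j.val = 1 ∧ 0 ≤ t ∧ t < t2 p) ∨ (j.val = 0 ∧ t2 p ≤ t ∧ t < Tm p)
      ∨ (j.val = 2*p+3 ∧ Tm p ≤ t ∧ t < 1) := by
  simp only [α0M, β0M] at h1 h2
  by_cases e0 : j.val = 0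
  · rw [if_pos e0] at h1 h2; exact Or.inr (Or.inl ⟨e0, h1, h2⟩)
  · by_cases e1 : j.val = 1
    · rw [if_neg e0, if_pos e1] at h1 h2; exact Or.inl ⟨e1, h1, h2⟩
    · by_cases e3 : j.val = 2*p+3
      · rw [if_neg e0, if_neg e1, if_pos e3] at h1 h2; exact Or.inr (Or.inr ⟨e3, h1, h2⟩)
      · rw [if_neg e0, if_neg e1, if_neg e3] at h1 h2; linarith

lemma α0M_nonneg (j : Fin (2*p+4)) : 0 ≤ α0M p j := by
  unfold α0M
  split_ifs with h1 h2 h3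
  · exact (f_t2_pos p).le
  · norm_num
  · exact (f_Tm_pos p).le
  · norm_num

lemma β0M_le_τM (j : Fin (2*p+4)) : β0M p j ≤ τM p j := by
  unfold β0M
  by_cases e0 : j.val = 0
  · rw [if_pos e0]; unfold τM; rw [if_pos e0]
  · by_cases e1 : j.val = 1
    · rw [if_neg e0, if_pos e1]; unfold τM; rw [if_neg e0, if_pos e1]
    · by_cases e3 : j.val = 2*p+3
      · rw [if_neg e0, if_neg e1, if_pos e3]
        unfold τM
        rw [if_neg e0, if_neg e1, if_neg (by omega), if_neg (by omega)]
      · rw [if_neg e0, if_neg e1, if_neg e3]; exact τM_nonneg p j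

lemma M0_disj (t : ℝ) (j j' : Fin (2*p+4)) (h1 : α0M p j ≤ t) (h2 : t < β0M p j)
    (h1' : α0M p j' ≤ t) (h2' : t < β0M p j') : j = j' := by
  have := f_t2_Tm p
  rcases M0_key p t j h1 h2 with ⟨e, he1, he2⟩ | ⟨e, he1, he2⟩ | ⟨e, he1, he2⟩ <;>
    rcases M0_key p t j' h1' h2' with ⟨e', he1', he2'⟩ | ⟨e', he1', he2'⟩ | ⟨e', he1', he2'⟩ <;>
    first
      | (exact Fin.ext (by omega))
      | linarith

lemma M0_cov (t : ℝ) (h0 : 0 ≤ t) (h1 : t < 1) :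
    ∃ j : Fin (2*p+4), α0M p j ≤ t ∧ t < β0M p j := by
  rcases lt_or_ge t (t2 p) with h | h
  · have hne : ¬ (⟨1, by omega⟩ : Fin (2*p+4)).val = 0 := by simp
    refine ⟨⟨1, by omega⟩, ?_, ?_⟩ <;>
      simp only [α0M, β0M, if_neg hne, if_pos rfl] <;> assumption
  · rcases lt_or_ge t (Tm p) with h' | h'
    · refine ⟨⟨0, by omega⟩, ?_, ?_⟩ <;>
        simp only [α0M, β0M, if_pos rfl] <;> assumption
    · have hne0 : ¬ (⟨2*p+3, by omega⟩ : Fin (2*p+4)).val = 0 := by simp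
      have hne1 : ¬ (⟨2*p+3, by omega⟩ : Fin (2*p+4)).val = 1 := by simp
      refine ⟨⟨2*p+3, by omega⟩, ?_, ?_⟩ <;>
        simp only [α0M, β0M, if_neg hne0, if_neg hne1, if_pos rfl] <;> assumption

lemma M0_min (t : ℝ) (ht : 0 ≤ t) (j j' : Fin (2*p+4)) (h1 : α0M p j ≤ t)
    (h2 : t < β0M p j) (h' : t < τM p j') : rk0M p j ≤ rk0M p j' := by
  rcases M0_key p t j h1 h2 with ⟨e, he1, he2⟩ | ⟨e, he1, he2⟩ | ⟨e, he1, he2⟩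
  · simp only [rk0M, if_neg (show ¬j.val = 0 by omega), if_pos e]
    exact Nat.zero_le _
  · have hrj : rk0M p j = 1 := by simp only [rk0M, if_pos e]
    rw [hrj]
    rcases icases p j' with hv' | hv' | ⟨hv2', hvP'⟩ | ⟨hvS', hvS''⟩ | hv'
    · simp only [rk0M, if_pos hv']
      exact le_rfl
    · exfalso
      unfold τM at h'; rw [if_neg (by omega), if_pos hv'] at h'
      linarith
    · simp only [rk0M, if_neg (show ¬j'.val = 0 by omega), if_neg (show ¬j'.val = 1 by omega),
        if_pos hvP']
      omega
    · simp only [rk0M, if_neg (show ¬j'.val = 0 by omega), if_neg (show ¬j'.val = 1 by omega),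
        if_neg (show ¬j'.val ≤ p+1 by omega)]
      omega
    · simp only [rk0M, if_neg (show ¬j'.val = 0 by omega), if_neg (show ¬j'.val = 1 by omega),
        if_neg (show ¬j'.val ≤ p+1 by omega)]
      omega
  · have hrj : rk0M p j = 2 := by
      simp only [rk0M, if_neg (show ¬j.val = 0 by omega), if_neg (show ¬j.val = 1 by omega),
        if_neg (show ¬j.val ≤ p+1 by omega)]
      omega
    rw [hrj]
    have ht2T := f_t2_Tm p
    rcases icases p j' with hv' | hv' | ⟨hv2', hvP'⟩ | ⟨hvS', hvS''⟩ | hv'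
    · exfalso; unfold τM at h'; rw [if_pos hv'] at h'; linarith
    · exfalso; unfold τM at h'; rw [if_neg (by omega), if_pos hv'] at h'; linarith
    · simp only [rk0M, if_neg (show ¬j'.val = 0 by omega), if_neg (show ¬j'.val = 1 by omega),
        if_pos hvP']
      omega
    · simp only [rk0M, if_neg (show ¬j'.val = 0 by omega), if_neg (show ¬j'.val = 1 by omega),
        if_neg (show ¬j'.val ≤ p+1 by omega)]
      omega
    · simp only [rk0M, if_neg (show ¬j'.val = 0 by omega), if_neg (show ¬j'.val = 1 by omega),
        if_neg (show ¬j'.val ≤ p+1 by omega)]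
      omega

/-! ### schedule 1M (agent 1, misreport): A then last sink -/

lemma M1_key (t : ℝ) (j : Fin (2*p+4)) (h1 : α1M p j ≤ t) (h2 : t < β1M p j) :
    (j.val = 0 ∧ 0 ≤ t ∧ t < Tm p) ∨ (j.val = 2*p+3 ∧ Tm p ≤ t ∧ t < 1) := by
  simp only [α1M, β1M] at h1 h2
  by_cases e0 : j.val = 0
  · rw [if_pos e0] at h1 h2; exact Or.inl ⟨e0, h1, h2⟩
  · by_cases e3 : j.val = 2*p+3
    · rw [if_neg e0, if_pos e3] at h1 h2; exact Or.inr ⟨e3, h1, h2⟩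
    · rw [if_neg e0, if_neg e3] at h1 h2; linarith

lemma α1M_nonneg (j : Fin (2*p+4)) : 0 ≤ α1M p j := by
  unfold α1M
  split_ifs
  · norm_num
  · exact (f_Tm_pos p).le
  · norm_num

lemma β1M_le_τM (j : Fin (2*p+4)) : β1M p j ≤ τM p j := by
  unfold β1M
  by_cases e0 : j.val = 0
  · rw [if_pos e0]; unfold τM; rw [if_pos e0]
  · by_cases e3 : j.val = 2*p+3
    · rw [if_neg e0, if_pos e3]
      unfold τM
      rw [if_neg e0, if_neg (by omega), if_neg (by omega), if_neg (by omega)]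
    · rw [if_neg e0, if_neg e3]; exact τM_nonneg p j

lemma M1_disj (t : ℝ) (j j' : Fin (2*p+4)) (h1 : α1M p j ≤ t) (h2 : t < β1M p j)
    (h1' : α1M p j' ≤ t) (h2' : t < β1M p j') : j = j' := by
  rcases M1_key p t j h1 h2 with ⟨e, he1, he2⟩ | ⟨e, he1, he2⟩ <;>
    rcases M1_key p t j' h1' h2' with ⟨e', he1', he2'⟩ | ⟨e', he1', he2'⟩ <;>
    first
      | (exact Fin.ext (by omega))
      | linarith

lemma M1_cov (t : ℝ) (h0 : 0 ≤ t) (h1 : t < 1) :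
    ∃ j : Fin (2*p+4), α1M p j ≤ t ∧ t < β1M p j := by
  rcases lt_or_ge t (Tm p) with h | h
  · refine ⟨⟨0, by omega⟩, ?_, ?_⟩ <;>
      simp only [α1M, β1M, if_pos rfl] <;> assumption
  · have hne0 : ¬ (⟨2*p+3, by omega⟩ : Fin (2*p+4)).val = 0 := by simp
    refine ⟨⟨2*p+3, by omega⟩, ?_, ?_⟩ <;>
      simp only [α1M, β1M, if_neg hne0, if_pos rfl] <;> assumption

lemma M1_min (t : ℝ) (ht : 0 ≤ t) (j j' : Fin (2*p+4)) (h1 : α1M p j ≤ t)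
    (h2 : t < β1M p j) (h' : t < τM p j') : rk1 p j ≤ rk1 p j' := by
  rcases M1_key p t j h1 h2 with ⟨e, he1, he2⟩ | ⟨e, he1, he2⟩
  · simp only [rk1, if_pos e]; exact Nat.zero_le _
  · have hrj : rk1 p j = 1 := by
      simp only [rk1, if_neg (show ¬j.val = 0 by omega), if_neg (show ¬j.val = 1 by omega),
        if_neg (show ¬j.val ≤ p+1 by omega)]
      omega
    rw [hrj]
    rcases icases p j' with hv' | hv' | ⟨hv2', hvP'⟩ | ⟨hvS', hvS''⟩ | hv'
    · exfalso; unfold τM at h'; rw [if_pos hv'] at h'; linarith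
    · simp only [rk1, if_neg (show ¬j'.val = 0 by omega), if_pos hv']; omega
    · simp only [rk1, if_neg (show ¬j'.val = 0 by omega), if_neg (show ¬j'.val = 1 by omega),
        if_pos hvP']
      omega
    · simp only [rk1, if_neg (show ¬j'.val = 0 by omega), if_neg (show ¬j'.val = 1 by omega),
        if_neg (show ¬j'.val ≤ p+1 by omega)]
      omega
    · simp only [rk1, if_neg (show ¬j'.val = 0 by omega), if_neg (show ¬j'.val = 1 by omega),
        if_neg (show ¬j'.val ≤ p+1 by omega)]
      omega

end Inst
end IRT

namespace IRT
section Inst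
variable (p : ℕ)

/-- sink death offsets are at most 1/2 -/
lemma sink_off_le (v : ℕ) (h : v ≤ 2*p+2) : ((v:ℝ)-((p:ℝ)+1))/g p ≤ 1/2 := by
  have h1 : ((v:ℝ)-((p:ℝ)+1)) ≤ (p:ℝ)+1 := by
    have : (v:ℝ) ≤ 2*(p:ℝ)+2 := by exact_mod_cast h
    linarith
  have := divg_le_divg p h1
  rwa [f_p1_div_g] at this

/-! ### schedule GT (group agents, truthful run) -/

lemma GT_key (t : ℝ) (j : Fin (2*p+4)) (h1 : αGT p j ≤ t) (h2 : t < βGT p j) :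
    (j.val = 1 ∧ dd p ≤ t ∧ t < 1/2) ∨
    ((2 ≤ j.val ∧ j.val ≤ p+1) ∧ ((j.val:ℝ)-2)/g p ≤ t ∧ t < ((j.val:ℝ)-1)/g p) ∨
    ((p+2 ≤ j.val ∧ j.val ≤ 2*p+2) ∧ 1/2 + ((j.val:ℝ)-((p:ℝ)+2))/g p ≤ t
        ∧ t < 1/2 + ((j.val:ℝ)-((p:ℝ)+1))/g p) := by
  simp only [αGT, βGT] at h1 h2
  rcases icases p j with hv | hv | ⟨hv2, hvP⟩ | ⟨hvS, hvS'⟩ | hv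
  · rw [if_pos hv] at h1 h2; linarith
  · rw [if_neg (by omega), if_pos hv] at h1 h2; exact Or.inl ⟨hv, h1, h2⟩
  · rw [if_neg (by omega), if_neg (by omega), if_pos hvP] at h1 h2
    exact Or.inr (Or.inl ⟨⟨hv2, hvP⟩, h1, h2⟩)
  · rw [if_neg (by omega), if_neg (by omega), if_neg (by omega), if_pos hvS'] at h1 h2
    exact Or.inr (Or.inr ⟨⟨hvS, hvS'⟩, h1, h2⟩)
  · rw [if_neg (by omega), if_neg (by omega), if_neg (by omega), if_neg (by omega)] at h1 h2
    linarith

lemma αGT_nonneg (j : Fin (2*p+4)) : 0 ≤ αGT p j := by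
  have hg := f_g p
  have hdd := f_dd0 p
  unfold αGT
  rcases icases p j with hv | hv | ⟨hv2, hvP⟩ | ⟨hvS, hvS'⟩ | hv
  · rw [if_pos hv]
  · rw [if_neg (by omega), if_pos hv]; exact hdd
  · rw [if_neg (by omega), if_neg (by omega), if_pos hvP]
    have hr2 : (2:ℝ) ≤ (j.val:ℝ) := by exact_mod_cast hv2
    exact div_nonneg (by linarith) hg.le
  · rw [if_neg (by omega), if_neg (by omega), if_neg (by omega), if_pos hvS']
    have hr2 : ((p:ℝ)+2) ≤ (j.val:ℝ) := by exact_mod_cast hvS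
    have : (0:ℝ) ≤ ((j.val:ℝ)-((p:ℝ)+2))/g p := div_nonneg (by linarith) hg.le
    linarith
  · rw [if_neg (by omega), if_neg (by omega), if_neg (by omega), if_neg (by omega)]

lemma βGT_le_τT (j : Fin (2*p+4)) : βGT p j ≤ τT p j := by
  have hg := f_g p
  unfold βGT τT
  rcases icases p j with hv | hv | ⟨hv2, hvP⟩ | ⟨hvS, hvS'⟩ | hv
  · rw [if_pos hv, if_pos hv]; norm_num
  · rw [if_neg (by omega), if_pos hv, if_neg (by omega), if_pos hv]
  · rw [if_neg (by omega), if_neg (by omega), if_pos hvP, if_neg (by omega),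
      if_neg (by omega), if_pos hvP]
  · rw [if_neg (by omega), if_neg (by omega), if_neg (by omega), if_pos hvS',
      if_neg (by omega), if_neg (by omega), if_neg (by omega), if_pos hvS']
  · rw [if_neg (by omega), if_neg (by omega), if_neg (by omega), if_neg (by omega),
      if_neg (by omega), if_neg (by omega), if_neg (by omega), if_neg (by omega)]
    norm_num

lemma GT_disj (t : ℝ) (j j' : Fin (2*p+4)) (h1 : αGT p j ≤ t) (h2 : t < βGT p j)
    (h1' : αGT p j' ≤ t) (h2' : t < βGT p j') : j = j' := by
  have hg := f_g p
  have hdd := f_dd_half p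
  have pool_ub : ∀ v : ℕ, v ≤ p+1 → ((v:ℝ)-1)/g p ≤ dd p := by
    intro v hv
    have h1 : ((v:ℝ)-1) ≤ (p:ℝ) := by
      have : (v:ℝ) ≤ (p:ℝ)+1 := by exact_mod_cast hv
      linarith
    have := divg_le_divg p h1
    rwa [f_p_div_g] at this
  have sink_lb : ∀ v : ℕ, p+2 ≤ v → (0:ℝ) ≤ ((v:ℝ)-((p:ℝ)+2))/g p := by
    intro v hv
    have : ((p:ℝ)+2) ≤ (v:ℝ) := by exact_mod_cast hv
    exact div_nonneg (by linarith) hg.le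
  rcases GT_key p t j h1 h2 with ⟨e, he1, he2⟩ | ⟨⟨e1, e2⟩, he1, he2⟩ | ⟨⟨e1, e2⟩, he1, he2⟩ <;>
    rcases GT_key p t j' h1' h2' with ⟨e', he1', he2'⟩ | ⟨⟨e1', e2'⟩, he1', he2'⟩ |
      ⟨⟨e1', e2'⟩, he1', he2'⟩
  · exact Fin.ext (by omega)
  · exact absurd (lt_of_lt_of_le he2' (pool_ub _ e2')) (not_lt.mpr he1)
  · have := sink_lb _ e1'; linarith
  · exact absurd (lt_of_lt_of_le he2 (pool_ub _ e2)) (not_lt.mpr he1')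
  · -- pool vs pool
    have k1 : (j.val:ℝ) - 2 < (j'.val:ℝ) - 1 := lt_of_divg_lt p (lt_of_le_of_lt he1 he2')
    have k2 : (j'.val:ℝ) - 2 < (j.val:ℝ) - 1 := lt_of_divg_lt p (lt_of_le_of_lt he1' he2)
    have k1' : j.val < j'.val + 1 := by exact_mod_cast (by linarith : (j.val:ℝ) < (j'.val:ℝ) + 1)
    have k2' : j'.val < j.val + 1 := by exact_mod_cast (by linarith : (j'.val:ℝ) < (j.val:ℝ) + 1)
    exact Fin.ext (by omega)
  · have hp := pool_ub _ e2
    have hs := sink_lb _ e1'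
    linarith
  · have := sink_lb _ e1; linarith
  · have hp := pool_ub _ e2'
    have hs := sink_lb _ e1
    linarith
  · -- sink vs sink
    have k1 : (j.val:ℝ) - ((p:ℝ)+2) < (j'.val:ℝ) - ((p:ℝ)+1) :=
      lt_of_divg_lt p (by linarith)
    have k2 : (j'.val:ℝ) - ((p:ℝ)+2) < (j.val:ℝ) - ((p:ℝ)+1) :=
      lt_of_divg_lt p (by linarith)
    have k1' : j.val < j'.val + 1 := by exact_mod_cast (by linarith : (j.val:ℝ) < (j'.val:ℝ) + 1)
    have k2' : j'.val < j.val + 1 := by exact_mod_cast (by linarith : (j'.val:ℝ) < (j.val:ℝ) + 1)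
    exact Fin.ext (by omega)

lemma GT_cov (t : ℝ) (h0 : 0 ≤ t) (h1 : t < 1) :
    ∃ j : Fin (2*p+4), αGT p j ≤ t ∧ t < βGT p j := by
  have hg := f_g p
  rcases lt_or_ge t (dd p) with h | h
  · -- pool phase
    set l := ⌊g p * t⌋₊ with hl
    have hgt0 : 0 ≤ g p * t := mul_nonneg hg.le h0
    have hfl : (l:ℝ) ≤ g p * t := Nat.floor_le hgt0
    have hfu : g p * t < (l:ℝ) + 1 := Nat.lt_floor_add_one _
    have hltp : (l:ℝ) < (p:ℝ) := by
      have : g p * t < g p * dd p := mul_lt_mul_of_pos_left h hg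
      rw [f_gdd] at this
      linarith
    have hlp : l < p := by exact_mod_cast hltp
    refine ⟨⟨2+l, by omega⟩, ?_, ?_⟩
    · show αGT p ⟨2+l, by omega⟩ ≤ t
      have e : (⟨2+l, by omega⟩ : Fin (2*p+4)).val = 2+l := rfl
      unfold αGT
      rw [e, if_neg (by omega), if_neg (by omega), if_pos (by omega)]
      rw [div_le_iff₀ hg]
      push_cast
      nlinarith
    · show t < βGT p ⟨2+l, by omega⟩
      have e : (⟨2+l, by omega⟩ : Fin (2*p+4)).val = 2+l := rfl
      unfold βGT
      rw [e, if_neg (by omega), if_neg (by omega), if_pos (by omega)]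
      rw [lt_div_iff₀ hg]
      push_cast
      nlinarith
  · rcases lt_or_ge t (1/2) with h' | h'
    · refine ⟨⟨1, by omega⟩, ?_, ?_⟩
      · show αGT p ⟨1, by omega⟩ ≤ t
        unfold αGT
        rw [if_neg (by simp), if_pos rfl]
        exact h
      · show t < βGT p ⟨1, by omega⟩
        unfold βGT
        rw [if_neg (by simp), if_pos rfl]
        exact h'
    · -- sink phase
      set l := ⌊g p * (t - 1/2)⌋₊ with hl
      have hgt0 : 0 ≤ g p * (t - 1/2) := mul_nonneg hg.le (by linarith)
      have hfl : (l:ℝ) ≤ g p * (t - 1/2) := Nat.floor_le hgt0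
      have hfu : g p * (t - 1/2) < (l:ℝ) + 1 := Nat.lt_floor_add_one _
      have hltp : (l:ℝ) < (p:ℝ) + 1 := by
        have : g p * (t - 1/2) < g p * (1/2) := mul_lt_mul_of_pos_left (by linarith) hg
        rw [f_ghalf] at this
        linarith
      have hlp : l < p + 1 := by exact_mod_cast hltp
      refine ⟨⟨p+2+l, by omega⟩, ?_, ?_⟩
      · show αGT p ⟨p+2+l, by omega⟩ ≤ t
        have e : (⟨p+2+l, by omega⟩ : Fin (2*p+4)).val = p+2+l := rfl
        unfold αGT
        rw [e, if_neg (by omega), if_neg (by omega), if_neg (by omega), if_pos (by omega)]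
        have e2 : ((p+2+l:ℕ):ℝ) - ((p:ℝ)+2) = (l:ℝ) := by push_cast; ring
        rw [e2]
        have : (l:ℝ)/g p ≤ t - 1/2 := by rw [div_le_iff₀ hg]; nlinarith
        linarith
      · show t < βGT p ⟨p+2+l, by omega⟩
        have e : (⟨p+2+l, by omega⟩ : Fin (2*p+4)).val = p+2+l := rfl
        unfold βGT
        rw [e, if_neg (by omega), if_neg (by omega), if_neg (by omega), if_pos (by omega)]
        have e2 : ((p+2+l:ℕ):ℝ) - ((p:ℝ)+1) = (l:ℝ) + 1 := by push_cast; ring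
        rw [e2]
        have : t - 1/2 < ((l:ℝ)+1)/g p := by rw [lt_div_iff₀ hg]; nlinarith
        linarith

lemma GT_min (t : ℝ) (ht : 0 ≤ t) (j j' : Fin (2*p+4)) (h1 : αGT p j ≤ t)
    (h2 : t < βGT p j) (h' : t < τT p j') : rkG p j ≤ rkG p j' := by
  have hg := f_g p
  have hdd := f_dd_half p
  rcases GT_key p t j h1 h2 with ⟨e, he1, he2⟩ | ⟨⟨e1, e2⟩, he1, he2⟩ | ⟨⟨e1, e2⟩, he1, he2⟩
  · -- j = B, rank p
    have hrj : rkG p j = p := by simp only [rkG, if_neg (show ¬j.val = 0 by omega), if_pos e]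
    rw [hrj]
    rcases icases p j' with hv' | hv' | ⟨hv2', hvP'⟩ | ⟨hvS', hvS''⟩ | hv'
    · simp only [rkG, if_pos hv']; omega
    · simp only [rkG, if_neg (show ¬j'.val = 0 by omega), if_pos hv']; omega
    · exact absurd (pool_dead p t j' hv2' hvP' h') (not_lt.mpr he1)
    · simp only [rkG, if_neg (show ¬j'.val = 0 by omega), if_neg (show ¬j'.val = 1 by omega),
        if_neg (show ¬j'.val ≤ p+1 by omega)]
      omega
    · simp only [rkG, if_neg (show ¬j'.val = 0 by omega), if_neg (show ¬j'.val = 1 by omega),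
        if_neg (show ¬j'.val ≤ p+1 by omega)]
      omega
  · -- j pool, rank j.val - 2
    have hrj : rkG p j = j.val - 2 := by
      simp only [rkG, if_neg (show ¬j.val = 0 by omega), if_neg (show ¬j.val = 1 by omega),
        if_pos e2]
    rw [hrj]
    rcases icases p j' with hv' | hv' | ⟨hv2', hvP'⟩ | ⟨hvS', hvS''⟩ | hv'
    · simp only [rkG, if_pos hv']; omega
    · simp only [rkG, if_neg (show ¬j'.val = 0 by omega), if_pos hv']; omega
    · -- pool vs pool
      unfold τT at h'
      rw [if_neg (by omega), if_neg (by omega), if_pos hvP'] at h'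
      have k1 : (j.val:ℝ) - 2 < (j'.val:ℝ) - 1 := lt_of_divg_lt p (lt_of_le_of_lt he1 h')
      have k1' : j.val < j'.val + 1 := by
        exact_mod_cast (by linarith : (j.val:ℝ) < (j'.val:ℝ) + 1)
      simp only [rkG, if_neg (show ¬j'.val = 0 by omega), if_neg (show ¬j'.val = 1 by omega),
        if_pos hvP']
      omega
    · simp only [rkG, if_neg (show ¬j'.val = 0 by omega), if_neg (show ¬j'.val = 1 by omega),
        if_neg (show ¬j'.val ≤ p+1 by omega)]
      omega
    · simp only [rkG, if_neg (show ¬j'.val = 0 by omega), if_neg (show ¬j'.val = 1 by omega),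
        if_neg (show ¬j'.val ≤ p+1 by omega)]
      omega
  · -- j sink, rank j.val - 1
    have hr2 : ((p:ℝ)+2) ≤ (j.val:ℝ) := by exact_mod_cast e1
    have hsink0 : (0:ℝ) ≤ ((j.val:ℝ)-((p:ℝ)+2))/g p := div_nonneg (by linarith) hg.le
    have hthalf : 1/2 ≤ t := by linarith
    have hrj : rkG p j = j.val - 1 := by
      simp only [rkG, if_neg (show ¬j.val = 0 by omega), if_neg (show ¬j.val = 1 by omega),
        if_neg (show ¬j.val ≤ p+1 by omega)]
    rw [hrj]
    rcases icases p j' with hv' | hv' | ⟨hv2', hvP'⟩ | ⟨hvS', hvS''⟩ | hv'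
    · exfalso; unfold τT at h'; rw [if_pos hv'] at h'; linarith
    · exfalso; unfold τT at h'; rw [if_neg (by omega), if_pos hv'] at h'; linarith
    · exact absurd (pool_dead p t j' hv2' hvP' h') (not_lt.mpr (by linarith))
    · -- sink vs sink
      unfold τT at h'
      rw [if_neg (by omega), if_neg (by omega), if_neg (by omega), if_pos hvS''] at h'
      have k1 : (j.val:ℝ) - ((p:ℝ)+2) < (j'.val:ℝ) - ((p:ℝ)+1) :=
        lt_of_divg_lt p (by linarith)
      have k1' : j.val < j'.val + 1 := by
        exact_mod_cast (by linarith : (j.val:ℝ) < (j'.val:ℝ) + 1)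
      simp only [rkG, if_neg (show ¬j'.val = 0 by omega), if_neg (show ¬j'.val = 1 by omega),
        if_neg (show ¬j'.val ≤ p+1 by omega)]
      omega
    · simp only [rkG, if_neg (show ¬j'.val = 0 by omega), if_neg (show ¬j'.val = 1 by omega),
        if_neg (show ¬j'.val ≤ p+1 by omega)]
      omega

end Inst
end IRT

namespace IRT
section Inst
variable (p : ℕ)

/-! ### schedule GM (group agents, misreport run) -/

lemma GM_key (t : ℝ) (j : Fin (2*p+4)) (h1 : αGM p j ≤ t) (h2 : t < βGM p j) :
    (j.val = 1 ∧ dd p ≤ t ∧ t < t2 p) ∨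
    ((2 ≤ j.val ∧ j.val ≤ p+1) ∧ ((j.val:ℝ)-2)/g p ≤ t ∧ t < ((j.val:ℝ)-1)/g p) ∨
    ((p+2 ≤ j.val ∧ j.val ≤ 2*p+2) ∧ t2 p + ((j.val:ℝ)-((p:ℝ)+2))/g p ≤ t
        ∧ t < t2 p + ((j.val:ℝ)-((p:ℝ)+1))/g p) ∨
    (j.val = 2*p+3 ∧ t3 p ≤ t ∧ t < 1) := by
  simp only [αGM, βGM] at h1 h2
  rcases icases p j with hv | hv | ⟨hv2, hvP⟩ | ⟨hvS, hvS'⟩ | hv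
  · rw [if_pos hv] at h1 h2; linarith
  · rw [if_neg (by omega), if_pos hv] at h1 h2; exact Or.inl ⟨hv, h1, h2⟩
  · rw [if_neg (by omega), if_neg (by omega), if_pos hvP] at h1 h2
    exact Or.inr (Or.inl ⟨⟨hv2, hvP⟩, h1, h2⟩)
  · rw [if_neg (by omega), if_neg (by omega), if_neg (by omega), if_pos hvS'] at h1 h2
    exact Or.inr (Or.inr (Or.inl ⟨⟨hvS, hvS'⟩, h1, h2⟩))
  · rw [if_neg (by omega), if_neg (by omega), if_neg (by omega), if_neg (by omega)] at h1 h2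
    exact Or.inr (Or.inr (Or.inr ⟨hv, h1, h2⟩))

lemma αGM_nonneg (j : Fin (2*p+4)) : 0 ≤ αGM p j := by
  have hg := f_g p
  have hdd := f_dd0 p
  unfold αGM
  rcases icases p j with hv | hv | ⟨hv2, hvP⟩ | ⟨hvS, hvS'⟩ | hv
  · rw [if_pos hv]
  · rw [if_neg (by omega), if_pos hv]; exact hdd
  · rw [if_neg (by omega), if_neg (by omega), if_pos hvP]
    have hr2 : (2:ℝ) ≤ (j.val:ℝ) := by exact_mod_cast hv2
    exact div_nonneg (by linarith) hg.le
  · rw [if_neg (by omega), if_neg (by omega), if_neg (by omega), if_pos hvS']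
    have hr2 : ((p:ℝ)+2) ≤ (j.val:ℝ) := by exact_mod_cast hvS
    have h3 : (0:ℝ) ≤ ((j.val:ℝ)-((p:ℝ)+2))/g p := div_nonneg (by linarith) hg.le
    have := f_t2_pos p
    linarith
  · rw [if_neg (by omega), if_neg (by omega), if_neg (by omega), if_neg (by omega)]
    have := f_t2_pos p
    show (0:ℝ) ≤ t3 p
    unfold t3
    linarith

lemma βGM_le_τM (j : Fin (2*p+4)) : βGM p j ≤ τM p j := by
  unfold βGM τM
  split_ifs <;> first
    | exact le_rfl
    | exact (f_Tm_pos p).le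

/-- pool windows are below `dd p ≤ t2 p` -/
lemma pool_ubM (v : ℕ) (hv : v ≤ p+1) : ((v:ℝ)-1)/g p ≤ dd p := by
  have h1 : ((v:ℝ)-1) ≤ (p:ℝ) := by
    have : (v:ℝ) ≤ (p:ℝ)+1 := by exact_mod_cast hv
    linarith
  have := divg_le_divg p h1
  rwa [f_p_div_g] at this

lemma sink_lb0 (v : ℕ) (hv : p+2 ≤ v) : (0:ℝ) ≤ ((v:ℝ)-((p:ℝ)+2))/g p := by
  have : ((p:ℝ)+2) ≤ (v:ℝ) := by exact_mod_cast hv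
  exact div_nonneg (by linarith) (f_g p).le

/-- sink windows (non-last) lie below `t3 p` -/
lemma sink_ub (v : ℕ) (hv : v ≤ 2*p+2) : t2 p + ((v:ℝ)-((p:ℝ)+1))/g p ≤ t3 p := by
  have := sink_off_le p v hv
  unfold t3
  linarith

lemma GM_disj (t : ℝ) (j j' : Fin (2*p+4)) (h1 : αGM p j ≤ t) (h2 : t < βGM p j)
    (h1' : αGM p j' ≤ t) (h2' : t < βGM p j') : j = j' := by
  have hg := f_g p
  have hdd := f_dd_lt p
  have ht2 := f_t2_pos p
  have ht3 : t2 p < t3 p := by unfold t3; linarith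
  rcases GM_key p t j h1 h2 with ⟨e, he1, he2⟩ | ⟨⟨e1, e2⟩, he1, he2⟩ |
      ⟨⟨e1, e2⟩, he1, he2⟩ | ⟨e, he1, he2⟩ <;>
    rcases GM_key p t j' h1' h2' with ⟨e', he1', he2'⟩ | ⟨⟨e1', e2'⟩, he1', he2'⟩ |
      ⟨⟨e1', e2'⟩, he1', he2'⟩ | ⟨e', he1', he2'⟩
  · exact Fin.ext (by omega)
  · exact absurd (lt_of_lt_of_le he2' (pool_ubM p _ e2')) (not_lt.mpr he1)
  · have := sink_lb0 p _ e1'; linarith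
  · linarith
  · exact absurd (lt_of_lt_of_le he2 (pool_ubM p _ e2)) (not_lt.mpr he1')
  · -- pool vs pool
    have k1 : (j.val:ℝ) - 2 < (j'.val:ℝ) - 1 := lt_of_divg_lt p (lt_of_le_of_lt he1 he2')
    have k2 : (j'.val:ℝ) - 2 < (j.val:ℝ) - 1 := lt_of_divg_lt p (lt_of_le_of_lt he1' he2)
    have k1' : j.val < j'.val + 1 := by exact_mod_cast (by linarith : (j.val:ℝ) < (j'.val:ℝ) + 1)
    have k2' : j'.val < j.val + 1 := by exact_mod_cast (by linarith : (j'.val:ℝ) < (j.val:ℝ) + 1)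
    exact Fin.ext (by omega)
  · have hp := pool_ubM p _ e2
    have hs := sink_lb0 p _ e1'
    linarith
  · have hp := pool_ubM p _ e2
    linarith
  · have := sink_lb0 p _ e1; linarith
  · have hp := pool_ubM p _ e2'
    have hs := sink_lb0 p _ e1
    linarith
  · -- sink vs sink
    have k1 : (j.val:ℝ) - ((p:ℝ)+2) < (j'.val:ℝ) - ((p:ℝ)+1) :=
      lt_of_divg_lt p (by linarith)
    have k2 : (j'.val:ℝ) - ((p:ℝ)+2) < (j.val:ℝ) - ((p:ℝ)+1) :=
      lt_of_divg_lt p (by linarith)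
    have k1' : j.val < j'.val + 1 := by exact_mod_cast (by linarith : (j.val:ℝ) < (j'.val:ℝ) + 1)
    have k2' : j'.val < j.val + 1 := by exact_mod_cast (by linarith : (j'.val:ℝ) < (j.val:ℝ) + 1)
    exact Fin.ext (by omega)
  · linarith [sink_ub p j.val e2]
  · linarith
  · have hp := pool_ubM p _ e2'
    linarith
  · linarith [sink_ub p j'.val e2', he1]
  · exact Fin.ext (by omega)

lemma GM_cov (t : ℝ) (h0 : 0 ≤ t) (h1 : t < 1) :
    ∃ j : Fin (2*p+4), αGM p j ≤ t ∧ t < βGM p j := by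
  have hg := f_g p
  rcases lt_or_ge t (dd p) with h | h
  · -- pool phase
    set l := ⌊g p * t⌋₊ with hl
    have hgt0 : 0 ≤ g p * t := mul_nonneg hg.le h0
    have hfl : (l:ℝ) ≤ g p * t := Nat.floor_le hgt0
    have hfu : g p * t < (l:ℝ) + 1 := Nat.lt_floor_add_one _
    have hltp : (l:ℝ) < (p:ℝ) := by
      have : g p * t < g p * dd p := mul_lt_mul_of_pos_left h hg
      rw [f_gdd] at this
      linarith
    have hlp : l < p := by exact_mod_cast hltp
    refine ⟨⟨2+l, by omega⟩, ?_, ?_⟩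
    · show αGM p ⟨2+l, by omega⟩ ≤ t
      have e : (⟨2+l, by omega⟩ : Fin (2*p+4)).val = 2+l := rfl
      unfold αGM
      rw [e, if_neg (by omega), if_neg (by omega), if_pos (by omega)]
      rw [div_le_iff₀ hg]
      push_cast
      nlinarith
    · show t < βGM p ⟨2+l, by omega⟩
      have e : (⟨2+l, by omega⟩ : Fin (2*p+4)).val = 2+l := rfl
      unfold βGM
      rw [e, if_neg (by omega), if_neg (by omega), if_pos (by omega)]
      rw [lt_div_iff₀ hg]
      push_cast
      nlinarith
  · rcases lt_or_ge t (t2 p) with h' | h'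
    · refine ⟨⟨1, by omega⟩, ?_, ?_⟩
      · show αGM p ⟨1, by omega⟩ ≤ t
        unfold αGM
        rw [if_neg (by simp), if_pos rfl]
        exact h
      · show t < βGM p ⟨1, by omega⟩
        unfold βGM
        rw [if_neg (by simp), if_pos rfl]
        exact h'
    · rcases lt_or_ge t (t3 p) with h'' | h''
      · -- sink phase
        set l := ⌊g p * (t - t2 p)⌋₊ with hl
        have hgt0 : 0 ≤ g p * (t - t2 p) := mul_nonneg hg.le (by linarith)
        have hfl : (l:ℝ) ≤ g p * (t - t2 p) := Nat.floor_le hgt0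
        have hfu : g p * (t - t2 p) < (l:ℝ) + 1 := Nat.lt_floor_add_one _
        have hltp : (l:ℝ) < (p:ℝ) + 1 := by
          have h5 : g p * (t - t2 p) < g p * (1/2) := by
            apply mul_lt_mul_of_pos_left _ hg
            have : t3 p = t2 p + 1/2 := rfl
            linarith
          rw [f_ghalf] at h5
          linarith
        have hlp : l < p + 1 := by exact_mod_cast hltp
        refine ⟨⟨p+2+l, by omega⟩, ?_, ?_⟩
        · show αGM p ⟨p+2+l, by omega⟩ ≤ t
          have e : (⟨p+2+l, by omega⟩ : Fin (2*p+4)).val = p+2+l := rfl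
          unfold αGM
          rw [e, if_neg (by omega), if_neg (by omega), if_neg (by omega), if_pos (by omega)]
          have e2 : ((p+2+l:ℕ):ℝ) - ((p:ℝ)+2) = (l:ℝ) := by push_cast; ring
          rw [e2]
          have : (l:ℝ)/g p ≤ t - t2 p := by rw [div_le_iff₀ hg]; nlinarith
          linarith
        · show t < βGM p ⟨p+2+l, by omega⟩
          have e : (⟨p+2+l, by omega⟩ : Fin (2*p+4)).val = p+2+l := rfl
          unfold βGM
          rw [e, if_neg (by omega), if_neg (by omega), if_neg (by omega), if_pos (by omega)]
          have e2 : ((p+2+l:ℕ):ℝ) - ((p:ℝ)+1) = (l:ℝ) + 1 := by push_cast; ring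
          rw [e2]
          have : t - t2 p < ((l:ℝ)+1)/g p := by rw [lt_div_iff₀ hg]; nlinarith
          linarith
      · -- last phase
        have hne0 : ¬ (⟨2*p+3, by omega⟩ : Fin (2*p+4)).val = 0 := by simp
        have hne1 : ¬ (⟨2*p+3, by omega⟩ : Fin (2*p+4)).val = 1 := by simp
        have hneP : ¬ (⟨2*p+3, by omega⟩ : Fin (2*p+4)).val ≤ p+1 := by simp; omega
        have hneS : ¬ (⟨2*p+3, by omega⟩ : Fin (2*p+4)).val ≤ 2*p+2 := by simp
        refine ⟨⟨2*p+3, by omega⟩, ?_, ?_⟩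
        · show αGM p ⟨2*p+3, by omega⟩ ≤ t
          unfold αGM
          rw [if_neg hne0, if_neg hne1, if_neg hneP, if_neg hneS]
          exact h''
        · show t < βGM p ⟨2*p+3, by omega⟩
          unfold βGM
          rw [if_neg hne0, if_neg hne1, if_neg hneP, if_neg hneS]
          exact h1

lemma GM_min (t : ℝ) (ht : 0 ≤ t) (j j' : Fin (2*p+4)) (h1 : αGM p j ≤ t)
    (h2 : t < βGM p j) (h' : t < τM p j') : rkG p j ≤ rkG p j' := by
  have hg := f_g p
  have hdd := f_dd_lt p
  have ht2 := f_t2_pos p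
  have ht3 : t2 p < t3 p := by unfold t3; linarith
  have hTmt3 := f_Tm_t3 p
  rcases GM_key p t j h1 h2 with ⟨e, he1, he2⟩ | ⟨⟨e1, e2⟩, he1, he2⟩ |
      ⟨⟨e1, e2⟩, he1, he2⟩ | ⟨e, he1, he2⟩
  · -- j = B, rank p
    have hrj : rkG p j = p := by simp only [rkG, if_neg (show ¬j.val = 0 by omega), if_pos e]
    rw [hrj]
    rcases icases p j' with hv' | hv' | ⟨hv2', hvP'⟩ | ⟨hvS', hvS''⟩ | hv'
    · simp only [rkG, if_pos hv']; omega
    · simp only [rkG, if_neg (show ¬j'.val = 0 by omega), if_pos hv']; omega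
    · exact absurd (pool_deadM p t j' hv2' hvP' h') (not_lt.mpr he1)
    · simp only [rkG, if_neg (show ¬j'.val = 0 by omega), if_neg (show ¬j'.val = 1 by omega),
        if_neg (show ¬j'.val ≤ p+1 by omega)]
      omega
    · simp only [rkG, if_neg (show ¬j'.val = 0 by omega), if_neg (show ¬j'.val = 1 by omega),
        if_neg (show ¬j'.val ≤ p+1 by omega)]
      omega
  · -- j pool, rank j.val - 2
    have hrj : rkG p j = j.val - 2 := by
      simp only [rkG, if_neg (show ¬j.val = 0 by omega), if_neg (show ¬j.val = 1 by omega),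
        if_pos e2]
    rw [hrj]
    rcases icases p j' with hv' | hv' | ⟨hv2', hvP'⟩ | ⟨hvS', hvS''⟩ | hv'
    · simp only [rkG, if_pos hv']; omega
    · simp only [rkG, if_neg (show ¬j'.val = 0 by omega), if_pos hv']; omega
    · -- pool vs pool
      unfold τM at h'
      rw [if_neg (by omega), if_neg (by omega), if_pos hvP'] at h'
      have k1 : (j.val:ℝ) - 2 < (j'.val:ℝ) - 1 := lt_of_divg_lt p (lt_of_le_of_lt he1 h')
      have k1' : j.val < j'.val + 1 := by
        exact_mod_cast (by linarith : (j.val:ℝ) < (j'.val:ℝ) + 1)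
      simp only [rkG, if_neg (show ¬j'.val = 0 by omega), if_neg (show ¬j'.val = 1 by omega),
        if_pos hvP']
      omega
    · simp only [rkG, if_neg (show ¬j'.val = 0 by omega), if_neg (show ¬j'.val = 1 by omega),
        if_neg (show ¬j'.val ≤ p+1 by omega)]
      omega
    · simp only [rkG, if_neg (show ¬j'.val = 0 by omega), if_neg (show ¬j'.val = 1 by omega),
        if_neg (show ¬j'.val ≤ p+1 by omega)]
      omega
  · -- j sink, rank j.val - 1  (p+1 ≤ rank ≤ 2p+1)
    have hr2 : ((p:ℝ)+2) ≤ (j.val:ℝ) := by exact_mod_cast e1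
    have hsink0 := sink_lb0 p j.val e1
    have htt2 : t2 p ≤ t := by linarith
    have hrj : rkG p j = j.val - 1 := by
      simp only [rkG, if_neg (show ¬j.val = 0 by omega), if_neg (show ¬j.val = 1 by omega),
        if_neg (show ¬j.val ≤ p+1 by omega)]
    rw [hrj]
    rcases icases p j' with hv' | hv' | ⟨hv2', hvP'⟩ | ⟨hvS', hvS''⟩ | hv'
    · simp only [rkG, if_pos hv']; omega
    · exfalso; unfold τM at h'; rw [if_neg (by omega), if_pos hv'] at h'; linarith
    · exact absurd (pool_deadM p t j' hv2' hvP' h') (not_lt.mpr (by linarith))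
    · -- sink vs sink
      unfold τM at h'
      rw [if_neg (by omega), if_neg (by omega), if_neg (by omega), if_pos hvS''] at h'
      have k1 : (j.val:ℝ) - ((p:ℝ)+2) < (j'.val:ℝ) - ((p:ℝ)+1) :=
        lt_of_divg_lt p (by linarith)
      have k1' : j.val < j'.val + 1 := by
        exact_mod_cast (by linarith : (j.val:ℝ) < (j'.val:ℝ) + 1)
      simp only [rkG, if_neg (show ¬j'.val = 0 by omega), if_neg (show ¬j'.val = 1 by omega),
        if_neg (show ¬j'.val ≤ p+1 by omega)]
      omega
    · simp only [rkG, if_neg (show ¬j'.val = 0 by omega), if_neg (show ¬j'.val = 1 by omega),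
        if_neg (show ¬j'.val ≤ p+1 by omega)]
      omega
  · -- j = last, rank 2p+2 : everything except the last item is dead
    have hrj : rkG p j = 2*p+2 := by
      simp only [rkG, if_neg (show ¬j.val = 0 by omega), if_neg (show ¬j.val = 1 by omega),
        if_neg (show ¬j.val ≤ p+1 by omega)]
      omega
    rw [hrj]
    rcases icases p j' with hv' | hv' | ⟨hv2', hvP'⟩ | ⟨hvS', hvS''⟩ | hv'
    · exfalso; unfold τM at h'; rw [if_pos hv'] at h'; linarith
    · exfalso; unfold τM at h'; rw [if_neg (by omega), if_pos hv'] at h'; linarith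
    · exact absurd (pool_deadM p t j' hv2' hvP' h') (not_lt.mpr (by linarith))
    · exfalso
      unfold τM at h'
      rw [if_neg (by omega), if_neg (by omega), if_neg (by omega), if_pos hvS''] at h'
      linarith [sink_ub p j'.val hvS'']
    · simp only [rkG, if_neg (show ¬j'.val = 0 by omega), if_neg (show ¬j'.val = 1 by omega),
        if_neg (show ¬j'.val ≤ p+1 by omega)]
      omega

end Inst
end IRT

namespace IRT
section Inst
variable (p : ℕ)

lemma τT_le_one (j : Fin (2*p+4)) : τT p j ≤ 1 := by
  have hg := f_g p
  have hdd := f_dd_half p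
  unfold τT
  rcases icases p j with hv | hv | ⟨hv2, hvP⟩ | ⟨hvS, hvS'⟩ | hv
  · rw [if_pos hv]; norm_num
  · rw [if_neg (by omega), if_pos hv]; norm_num
  · rw [if_neg (by omega), if_neg (by omega), if_pos hvP]
    have := pool_ubM p j.val hvP
    linarith
  · rw [if_neg (by omega), if_neg (by omega), if_neg (by omega), if_pos hvS']
    have := sink_off_le p j.val hvS'
    linarith
  · rw [if_neg (by omega), if_neg (by omega), if_neg (by omega), if_neg (by omega)]

lemma τM_le_one (j : Fin (2*p+4)) : τM p j ≤ 1 := by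
  have hg := f_g p
  have hdd := f_dd_lt p
  have ht2 := f_t2_half p
  unfold τM
  rcases icases p j with hv | hv | ⟨hv2, hvP⟩ | ⟨hvS, hvS'⟩ | hv
  · rw [if_pos hv]; exact (f_Tm_lt1 p).le
  · rw [if_neg (by omega), if_pos hv]; linarith
  · rw [if_neg (by omega), if_neg (by omega), if_pos hvP]
    have := pool_ubM p j.val hvP
    have := f_dd_half p
    linarith
  · rw [if_neg (by omega), if_neg (by omega), if_neg (by omega), if_pos hvS']
    have := sink_off_le p j.val hvS'
    linarith
  · rw [if_neg (by omega), if_neg (by omega), if_neg (by omega), if_neg (by omega)]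

/-! ### the reported rank profiles -/

def rkT (i : Fin (2*p+4)) : Fin (2*p+4) → ℕ :=
  if i.val = 0 then rk0T p else if i.val = 1 then rk1 p else rkG p
def rkM (i : Fin (2*p+4)) : Fin (2*p+4) → ℕ :=
  if i.val = 0 then rk0M p else if i.val = 1 then rk1 p else rkG p

/-! ### the eating functions -/

noncomputable def eatsT (i : Fin (2*p+4)) : ℝ → Option (Fin (2*p+4)) :=
  if i.val ≤ 1 then mkEats (αPT p) (βPT p) else mkEats (αGT p) (βGT p)
noncomputable def eatsM (i : Fin (2*p+4)) : ℝ → Option (Fin (2*p+4)) :=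
  if i.val = 0 then mkEats (α0M p) (β0M p)
  else if i.val = 1 then mkEats (α1M p) (β1M p) else mkEats (αGM p) (βGM p)

/-- generic: measurability of level sets of `mkEats` -/
lemma meas_mk {k : ℕ} (α β : Fin k → ℝ)
    (hdisj : ∀ t (j j' : Fin k), α j ≤ t → t < β j → α j' ≤ t → t < β j' → j = j')
    (j : Fin k) : MeasurableSet {t : ℝ | mkEats α β t = some j} := by
  have : {t : ℝ | mkEats α β t = some j} = Set.Ico (α j) (β j) := by
    ext t
    rw [Set.mem_setOf_eq, mkEats_eq_some hdisj]
    simp [Set.mem_Ico]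
  rw [this]
  exact measurableSet_Ico

/-- generic: the windowed volume of a level set of `mkEats` -/
lemma vol_mk {k : ℕ} (α β : Fin k → ℝ)
    (hdisj : ∀ t (j j' : Fin k), α j ≤ t → t < β j → α j' ≤ t → t < β j' → j = j')
    (hα : ∀ j, 0 ≤ α j) (j : Fin k) (t : ℝ) :
    (MeasureTheory.volume {s : ℝ | 0 < s ∧ s ≤ t ∧ mkEats α β s = some j}).toReal
      = max 0 (min t (β j) - α j) := by
  have e : {s : ℝ | 0 < s ∧ s ≤ t ∧ mkEats α β s = some j}
      = {s : ℝ | 0 < s ∧ s ≤ t ∧ α j ≤ s ∧ s < β j} := by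
    ext s
    simp only [Set.mem_setOf_eq, mkEats_eq_some hdisj]
  rw [e, vol_win _ _ _ (hα j)]

/-- generic: total eaten amount -/
lemma vol_mk_total {k : ℕ} (α β : Fin k → ℝ)
    (hdisj : ∀ t (j j' : Fin k), α j ≤ t → t < β j → α j' ≤ t → t < β j' → j = j')
    (hα : ∀ j, 0 ≤ α j) (hβ : ∀ j, β j ≤ 1) (j : Fin k) :
    (MeasureTheory.volume {s : ℝ | 0 < s ∧ mkEats α β s = some j}).toReal
      = max 0 (min 1 (β j) - α j) := by
  have e : {s : ℝ | 0 < s ∧ mkEats α β s = some j}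
      = {s : ℝ | 0 < s ∧ α j ≤ s ∧ s < β j} := by
    ext s
    simp only [Set.mem_setOf_eq, mkEats_eq_some hdisj]
  rw [e, vol_win_total _ _ (hα j) (hβ j)]

lemma f_g_eq : g p = 2*(p:ℝ)+2 := rfl

/-! ### the truthful execution -/

noncomputable def ET : PSExec (2*p+4) (2*p+4) (rkT p) (fun _ _ => True) where
  eats := eatsT p
  rem := remT p
  meas := by
    intro i j
    unfold eatsT
    by_cases hi : i.val ≤ 1
    · rw [if_pos hi]; exact meas_mk _ _ (PT_disj p) j
    · rw [if_neg hi]; exact meas_mk _ _ (GT_disj p) j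
  rem_def := by
    intro j t ht
    have hsum : ∑ i : Fin (2*p+4),
        (MeasureTheory.volume {s : ℝ | 0 < s ∧ s ≤ t ∧ eatsT p i s = some j}).toReal
        = max 0 (min t (βPT p j) - αPT p j) + max 0 (min t (βPT p j) - αPT p j)
          + (2*(p:ℝ)+2) * max 0 (min t (βGT p j) - αGT p j) := by
      apply sum_split
      · have e : eatsT p ⟨0, by omega⟩ = mkEats (αPT p) (βPT p) := by
          unfold eatsT; rw [if_pos (by norm_num)]
        rw [e]; exact vol_mk _ _ (PT_disj p) (αPT_nonneg p) j t
      · have e : eatsT p ⟨1, by omega⟩ = mkEats (αPT p) (βPT p) := by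
          unfold eatsT; rw [if_pos (by norm_num)]
        rw [e]; exact vol_mk _ _ (PT_disj p) (αPT_nonneg p) j t
      · intro i hi
        have e : eatsT p i = mkEats (αGT p) (βGT p) := by
          unfold eatsT; rw [if_neg (by omega)]
        rw [e]; exact vol_mk _ _ (GT_disj p) (αGT_nonneg p) j t
    rw [hsum]
    unfold remT
    rw [f_g_eq]
    ring
  eats_iff := by
    intro i t ht _ j
    have hi3 : i.val = 0 ∨ i.val = 1 ∨ 2 ≤ i.val := by omega
    rcases hi3 with hi | hi | hi
    · have e : eatsT p i = mkEats (αPT p) (βPT p) := by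
        unfold eatsT; rw [if_pos (by omega)]
      have erk : rkT p i = rk0T p := by unfold rkT; rw [if_pos hi]
      rw [e, erk, mkEats_eq_some (PT_disj p)]
      constructor
      · rintro ⟨hw1, hw2⟩
        refine ⟨(remT_pos_iff p j t).mpr (lt_of_lt_of_le hw2 (βPT_le_τT p j)), ?_⟩
        intro j' hj'
        exact PT_min0 p t ht j j' hw1 hw2 ((remT_pos_iff p j' t).mp hj')
      · rintro ⟨halive, hmin⟩
        have hτ := (remT_pos_iff p j t).mp halive
        obtain ⟨j₀, hw₀1, hw₀2⟩ := PT_cov p t ht (lt_of_lt_of_le hτ (τT_le_one p j))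
        have halive₀ : 0 < remT p j₀ t :=
          (remT_pos_iff p j₀ t).mpr (lt_of_lt_of_le hw₀2 (βPT_le_τT p j₀))
        have r1 : rk0T p j₀ ≤ rk0T p j := PT_min0 p t ht j₀ j hw₀1 hw₀2 hτ
        have r2 : rk0T p j ≤ rk0T p j₀ := hmin j₀ halive₀
        have : j = j₀ := rk0T_inj p (le_antisymm r2 r1)
        rw [this]; exact ⟨hw₀1, hw₀2⟩
    · have e : eatsT p i = mkEats (αPT p) (βPT p) := by
        unfold eatsT; rw [if_pos (by omega)]
      have erk : rkT p i = rk1 p := by unfold rkT; rw [if_neg (by omega), if_pos hi]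
      rw [e, erk, mkEats_eq_some (PT_disj p)]
      constructor
      · rintro ⟨hw1, hw2⟩
        refine ⟨(remT_pos_iff p j t).mpr (lt_of_lt_of_le hw2 (βPT_le_τT p j)), ?_⟩
        intro j' hj'
        exact PT_min1 p t ht j j' hw1 hw2 ((remT_pos_iff p j' t).mp hj')
      · rintro ⟨halive, hmin⟩
        have hτ := (remT_pos_iff p j t).mp halive
        obtain ⟨j₀, hw₀1, hw₀2⟩ := PT_cov p t ht (lt_of_lt_of_le hτ (τT_le_one p j))
        have halive₀ : 0 < remT p j₀ t :=
          (remT_pos_iff p j₀ t).mpr (lt_of_lt_of_le hw₀2 (βPT_le_τT p j₀))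
        have r1 : rk1 p j₀ ≤ rk1 p j := PT_min1 p t ht j₀ j hw₀1 hw₀2 hτ
        have r2 : rk1 p j ≤ rk1 p j₀ := hmin j₀ halive₀
        have : j = j₀ := rk1_inj p (le_antisymm r2 r1)
        rw [this]; exact ⟨hw₀1, hw₀2⟩
    · have e : eatsT p i = mkEats (αGT p) (βGT p) := by
        unfold eatsT; rw [if_neg (by omega)]
      have erk : rkT p i = rkG p := by
        unfold rkT; rw [if_neg (by omega), if_neg (by omega)]
      rw [e, erk, mkEats_eq_some (GT_disj p)]
      constructor
      · rintro ⟨hw1, hw2⟩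
        refine ⟨(remT_pos_iff p j t).mpr (lt_of_lt_of_le hw2 (βGT_le_τT p j)), ?_⟩
        intro j' hj'
        exact GT_min p t ht j j' hw1 hw2 ((remT_pos_iff p j' t).mp hj')
      · rintro ⟨halive, hmin⟩
        have hτ := (remT_pos_iff p j t).mp halive
        obtain ⟨j₀, hw₀1, hw₀2⟩ := GT_cov p t ht (lt_of_lt_of_le hτ (τT_le_one p j))
        have halive₀ : 0 < remT p j₀ t :=
          (remT_pos_iff p j₀ t).mpr (lt_of_lt_of_le hw₀2 (βGT_le_τT p j₀))
        have r1 : rkG p j₀ ≤ rkG p j := GT_min p t ht j₀ j hw₀1 hw₀2 hτ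
        have r2 : rkG p j ≤ rkG p j₀ := hmin j₀ halive₀
        have : j = j₀ := rkG_inj p (le_antisymm r2 r1)
        rw [this]; exact ⟨hw₀1, hw₀2⟩
  eats_none := by
    intro i t h
    exact absurd trivial h

/-! ### the manipulated execution -/

noncomputable def EM : PSExec (2*p+4) (2*p+4) (rkM p) (fun _ _ => True) where
  eats := eatsM p
  rem := remM p
  meas := by
    intro i j
    unfold eatsM
    by_cases hi0 : i.val = 0
    · rw [if_pos hi0]; exact meas_mk _ _ (M0_disj p) j
    · rw [if_neg hi0]
      by_cases hi1 : i.val = 1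
      · rw [if_pos hi1]; exact meas_mk _ _ (M1_disj p) j
      · rw [if_neg hi1]; exact meas_mk _ _ (GM_disj p) j
  rem_def := by
    intro j t ht
    have hsum : ∑ i : Fin (2*p+4),
        (MeasureTheory.volume {s : ℝ | 0 < s ∧ s ≤ t ∧ eatsM p i s = some j}).toReal
        = max 0 (min t (β0M p j) - α0M p j) + max 0 (min t (β1M p j) - α1M p j)
          + (2*(p:ℝ)+2) * max 0 (min t (βGM p j) - αGM p j) := by
      apply sum_split
      · have e : eatsM p ⟨0, by omega⟩ = mkEats (α0M p) (β0M p) := by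
          unfold eatsM; rw [if_pos rfl]
        rw [e]; exact vol_mk _ _ (M0_disj p) (α0M_nonneg p) j t
      · have e : eatsM p ⟨1, by omega⟩ = mkEats (α1M p) (β1M p) := by
          unfold eatsM; rw [if_neg (by norm_num), if_pos rfl]
        rw [e]; exact vol_mk _ _ (M1_disj p) (α1M_nonneg p) j t
      · intro i hi
        have e : eatsM p i = mkEats (αGM p) (βGM p) := by
          unfold eatsM; rw [if_neg (by omega), if_neg (by omega)]
        rw [e]; exact vol_mk _ _ (GM_disj p) (αGM_nonneg p) j t
    rw [hsum]
    unfold remM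
    rw [f_g_eq]
    ring
  eats_iff := by
    intro i t ht _ j
    have hi3 : i.val = 0 ∨ i.val = 1 ∨ 2 ≤ i.val := by omega
    rcases hi3 with hi | hi | hi
    · have e : eatsM p i = mkEats (α0M p) (β0M p) := by
        unfold eatsM; rw [if_pos hi]
      have erk : rkM p i = rk0M p := by unfold rkM; rw [if_pos hi]
      rw [e, erk, mkEats_eq_some (M0_disj p)]
      constructor
      · rintro ⟨hw1, hw2⟩
        refine ⟨(remM_pos_iff p j t).mpr (lt_of_lt_of_le hw2 (β0M_le_τM p j)), ?_⟩
        intro j' hj'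
        exact M0_min p t ht j j' hw1 hw2 ((remM_pos_iff p j' t).mp hj')
      · rintro ⟨halive, hmin⟩
        have hτ := (remM_pos_iff p j t).mp halive
        obtain ⟨j₀, hw₀1, hw₀2⟩ := M0_cov p t ht (lt_of_lt_of_le hτ (τM_le_one p j))
        have halive₀ : 0 < remM p j₀ t :=
          (remM_pos_iff p j₀ t).mpr (lt_of_lt_of_le hw₀2 (β0M_le_τM p j₀))
        have r1 : rk0M p j₀ ≤ rk0M p j := M0_min p t ht j₀ j hw₀1 hw₀2 hτ
        have r2 : rk0M p j ≤ rk0M p j₀ := hmin j₀ halive₀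
        have : j = j₀ := rk0M_inj p (le_antisymm r2 r1)
        rw [this]; exact ⟨hw₀1, hw₀2⟩
    · have e : eatsM p i = mkEats (α1M p) (β1M p) := by
        unfold eatsM; rw [if_neg (by omega), if_pos hi]
      have erk : rkM p i = rk1 p := by unfold rkM; rw [if_neg (by omega), if_pos hi]
      rw [e, erk, mkEats_eq_some (M1_disj p)]
      constructor
      · rintro ⟨hw1, hw2⟩
        refine ⟨(remM_pos_iff p j t).mpr (lt_of_lt_of_le hw2 (β1M_le_τM p j)), ?_⟩
        intro j' hj'
        exact M1_min p t ht j j' hw1 hw2 ((remM_pos_iff p j' t).mp hj')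
      · rintro ⟨halive, hmin⟩
        have hτ := (remM_pos_iff p j t).mp halive
        obtain ⟨j₀, hw₀1, hw₀2⟩ := M1_cov p t ht (lt_of_lt_of_le hτ (τM_le_one p j))
        have halive₀ : 0 < remM p j₀ t :=
          (remM_pos_iff p j₀ t).mpr (lt_of_lt_of_le hw₀2 (β1M_le_τM p j₀))
        have r1 : rk1 p j₀ ≤ rk1 p j := M1_min p t ht j₀ j hw₀1 hw₀2 hτ
        have r2 : rk1 p j ≤ rk1 p j₀ := hmin j₀ halive₀
        have : j = j₀ := rk1_inj p (le_antisymm r2 r1)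
        rw [this]; exact ⟨hw₀1, hw₀2⟩
    · have e : eatsM p i = mkEats (αGM p) (βGM p) := by
        unfold eatsM; rw [if_neg (by omega), if_neg (by omega)]
      have erk : rkM p i = rkG p := by
        unfold rkM; rw [if_neg (by omega), if_neg (by omega)]
      rw [e, erk, mkEats_eq_some (GM_disj p)]
      constructor
      · rintro ⟨hw1, hw2⟩
        refine ⟨(remM_pos_iff p j t).mpr (lt_of_lt_of_le hw2 (βGM_le_τM p j)), ?_⟩
        intro j' hj'
        exact GM_min p t ht j j' hw1 hw2 ((remM_pos_iff p j' t).mp hj')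
      · rintro ⟨halive, hmin⟩
        have hτ := (remM_pos_iff p j t).mp halive
        obtain ⟨j₀, hw₀1, hw₀2⟩ := GM_cov p t ht (lt_of_lt_of_le hτ (τM_le_one p j))
        have halive₀ : 0 < remM p j₀ t :=
          (remM_pos_iff p j₀ t).mpr (lt_of_lt_of_le hw₀2 (βGM_le_τM p j₀))
        have r1 : rkG p j₀ ≤ rkG p j := GM_min p t ht j₀ j hw₀1 hw₀2 hτ
        have r2 : rkG p j ≤ rkG p j₀ := hmin j₀ halive₀
        have : j = j₀ := rkG_inj p (le_antisymm r2 r1)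
        rw [this]; exact ⟨hw₀1, hw₀2⟩
  eats_none := by
    intro i t h
    exact absurd trivial h

end Inst
end IRT

namespace IRT
section Inst
variable (p : ℕ)

noncomputable def aFun : Fin (2*p+4) → ℝ := fun j => if j.val ≤ 1 then 1 else 0

lemma βPT_le_one (j : Fin (2*p+4)) : βPT p j ≤ 1 := by
  unfold βPT; split_ifs <;> norm_num

lemma β0M_le_one (j : Fin (2*p+4)) : β0M p j ≤ 1 := by
  unfold β0M
  split_ifs
  · exact (f_Tm_lt1 p).le
  · linarith [f_t2_half p]
  · exact le_rfl
  · norm_num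

lemma utilT : (ET p).utility (aFun p) ⟨0, by omega⟩ = 1/2 := by
  unfold PSExec.utility
  have ealloc : ∀ j : Fin (2*p+4), (ET p).alloc ⟨0, by omega⟩ j
      = max 0 (min 1 (βPT p j) - αPT p j) := by
    intro j
    unfold PSExec.alloc
    have e : (ET p).eats ⟨0, by omega⟩ = mkEats (αPT p) (βPT p) := by
      show eatsT p ⟨0, by omega⟩ = _
      unfold eatsT; rw [if_pos (by norm_num)]
    rw [e]
    exact vol_mk_total _ _ (PT_disj p) (αPT_nonneg p) (βPT_le_one p) j
  apply Eq.trans (sum_split _ (1/2) 0 0 ?_ ?_ ?_)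
  · ring
  · rw [ealloc]
    have ea : aFun p ⟨0, by omega⟩ = 1 := by unfold aFun; rw [if_pos (by norm_num)]
    have eβ : βPT p ⟨0, by omega⟩ = 1/2 := by unfold βPT; rw [if_pos rfl]
    have eα : αPT p ⟨0, by omega⟩ = 0 := by unfold αPT; rw [if_pos rfl]
    rw [ea, eα, eβ]
    norm_num
  · rw [ealloc]
    have ea : aFun p ⟨1, by omega⟩ = 1 := by unfold aFun; rw [if_pos (by norm_num)]
    have eβ : βPT p ⟨1, by omega⟩ = 0 := by
      unfold βPT; rw [if_neg (by norm_num), if_neg (by simp)]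
    have eα : αPT p ⟨1, by omega⟩ = 0 := by
      unfold αPT; rw [if_neg (by norm_num), if_neg (by simp)]
    rw [ea, eα, eβ]
    norm_num
  · intro i hi
    have ea : aFun p i = 0 := by unfold aFun; rw [if_neg (by omega)]
    rw [ea]
    ring

lemma utilM : (EM p).utility (aFun p) ⟨0, by omega⟩ = Tm p := by
  unfold PSExec.utility
  have ealloc : ∀ j : Fin (2*p+4), (EM p).alloc ⟨0, by omega⟩ j
      = max 0 (min 1 (β0M p j) - α0M p j) := by
    intro j
    unfold PSExec.alloc
    have e : (EM p).eats ⟨0, by omega⟩ = mkEats (α0M p) (β0M p) := by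
      show eatsM p ⟨0, by omega⟩ = _
      unfold eatsM; rw [if_pos rfl]
    rw [e]
    exact vol_mk_total _ _ (M0_disj p) (α0M_nonneg p) (β0M_le_one p) j
  have hTm1 := f_Tm_lt1 p
  have ht2T := f_t2_Tm p
  have ht2 := f_t2_pos p
  have ht2h := f_t2_half p
  apply Eq.trans (sum_split _ (Tm p - t2 p) (t2 p) 0 ?_ ?_ ?_)
  · ring
  · rw [ealloc]
    have ea : aFun p ⟨0, by omega⟩ = 1 := by unfold aFun; rw [if_pos (by norm_num)]
    have eβ : β0M p ⟨0, by omega⟩ = Tm p := by unfold β0M; rw [if_pos rfl]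
    have eα : α0M p ⟨0, by omega⟩ = t2 p := by unfold α0M; rw [if_pos rfl]
    rw [ea, eα, eβ]
    rw [min_eq_right hTm1.le, max_eq_right (by linarith)]
    ring
  · rw [ealloc]
    have ea : aFun p ⟨1, by omega⟩ = 1 := by unfold aFun; rw [if_pos (by norm_num)]
    have eβ : β0M p ⟨1, by omega⟩ = t2 p := by
      unfold β0M; rw [if_neg (by norm_num), if_pos rfl]
    have eα : α0M p ⟨1, by omega⟩ = 0 := by
      unfold α0M; rw [if_neg (by norm_num), if_pos rfl]
    rw [ea, eα, eβ]
    rw [min_eq_right (by linarith), max_eq_right (by linarith)]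
    ring
  · intro i hi
    have ea : aFun p i = 0 := by unfold aFun; rw [if_neg (by omega)]
    rw [ea]
    ring

end Inst
end IRT


/-- the bound `3/2` on the incentive ratio of Probabilistic Serial is tight:
for every `ε > 0` there is an instance (with `n = m`) in which some agent's best-response
utility exceeds `3/2 - ε` times its truthful utility. -/

theorem incentive_ratio_three_halves_tight :
    ∀ ε : ℝ, 0 < ε →
      ∃ (n : ℕ) (rk rk' : Fin n → Fin n → ℕ),
        (∀ i, Function.Injective (rk i)) ∧ (∀ i, Function.Injective (rk' i)) ∧
        ∃ i1 : Fin n,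
          (∀ i, i ≠ i1 → rk' i = rk i) ∧
          ∃ a : Fin n → ℝ,
            (∀ j, 0 ≤ a j ∧ a j ≤ 1) ∧
            (∀ j j' : Fin n, a j' < a j → rk i1 j < rk i1 j') ∧
            ∃ (E : PSExec n n rk (fun _ _ => True))
              (E' : PSExec n n rk' (fun _ _ => True)),
              E'.utility a i1 / E.utility a i1 > 3 / 2 - ε := by
  intro ε hε
  set p : ℕ := ⌈1/ε⌉₊ with hp
  have hple : 1/ε ≤ (p:ℝ) := Nat.le_ceil _
  have hεp : 1 ≤ ε * (p:ℝ) := by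
    have h1 : ε * (1/ε) ≤ ε * (p:ℝ) := mul_le_mul_of_nonneg_left hple hε.le
    have h2 : ε * (1/ε) = 1 := by field_simp
    linarith
  refine ⟨2*p+4, IRT.rkT p, IRT.rkM p, ?_, ?_, ⟨0, by omega⟩, ?_, IRT.aFun p, ?_, ?_,
    IRT.ET p, IRT.EM p, ?_⟩
  · intro i
    unfold IRT.rkT
    split_ifs
    · exact IRT.rk0T_inj p
    · exact IRT.rk1_inj p
    · exact IRT.rkG_inj p
  · intro i
    unfold IRT.rkM
    split_ifs
    · exact IRT.rk0M_inj p
    · exact IRT.rk1_inj p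
    · exact IRT.rkG_inj p
  · intro i hne
    have h0 : ¬ i.val = 0 := by
      intro h
      exact hne (Fin.ext h)
    unfold IRT.rkM IRT.rkT
    rw [if_neg h0, if_neg h0]
  · intro j
    unfold IRT.aFun
    split_ifs <;> norm_num
  · intro j j' hlt
    unfold IRT.aFun at hlt
    have erk : IRT.rkT p ⟨0, by omega⟩ = IRT.rk0T p := by
      unfold IRT.rkT; rw [if_pos rfl]
    rw [erk]
    by_cases hj : j.val ≤ 1 <;> by_cases hj' : j'.val ≤ 1
    · rw [if_pos hj, if_pos hj'] at hlt; norm_num at hlt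
    · have h1 := j.isLt
      have h2 := j'.isLt
      unfold IRT.rk0T
      by_cases e0 : j.val = 0
      · rw [if_pos e0]
        split_ifs <;> omega
      · rw [if_neg e0, if_pos (by omega)]
        split_ifs <;> omega
    · rw [if_neg hj, if_pos hj'] at hlt; norm_num at hlt
    · rw [if_neg hj, if_neg hj'] at hlt; norm_num at hlt
  · rw [IRT.utilT p, IRT.utilM p]
    have hTm2 := IRT.f_Tm2 p
    have e : IRT.Tm p / (1/2) = 2 * IRT.Tm p := by ring
    rw [e, hTm2]
    have ht2 : IRT.t2 p = ((p:ℝ)+1)/(2*(p:ℝ)+3) := rfl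
    rw [ht2]
    have h23 : (0:ℝ) < 2*(p:ℝ)+3 := by positivity
    rw [gt_iff_lt, ← sub_lt_iff_lt_add', lt_div_iff₀ h23]
    nlinarith
end
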